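/- arXiv:2112.11752 — 2 statements merged into one kernel-verified Lean document; each statement's English description precedes it below -/
import Mathlib

section
/- Let (x_n)_{n≥1} be a sequence in [0,1), let 0 < α ≤ 1, and suppose there exists a function F : ℕ × ℕ → ℝ which is monotonically increasing in its first argument and satisfies, for all N ∈ ℕ and all integers 1 ≤ K ≤ N/2, max_{s=1,…,K} | (1/(2s)) · #{(l,m) : 1 ≤ l, m ≤ N, l ≠ m, ‖x_l − x_m‖ < s/N^α} − N^{2−α} | < F(K, N). Then there exists an integer N₀ > 0 such that for all N ≥ N₀ and all integers K satisfying (1/2) N^{(2/5)α} ≤ K ≤ N^{(2/5)α}, one has N^α · D_N*(x_n) ≤ 5 · max( N^{1 − (1/5)α}, √( N^α · F(K², N) ) ). -/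
open scoped Classical
set_option maxHeartbeats 2000000

/-- Distance from `x` to the nearest integer. -/
noncomputable def nint (x : ℝ) : ℝ := ⨅ k : ℤ, |x - (k : ℝ)|

/-- Number of ordered pairs `(l,m)`, `1 ≤ l,m ≤ N`, `l ≠ m`, with
`‖x_l - x_m‖ < r` (strict inequality). -/
noncomputable def pairCountLt (x : ℕ → ℝ) (N : ℕ) (r : ℝ) : ℕ :=
  (((Finset.Icc 1 N) ×ˢ (Finset.Icc 1 N)).filter
    (fun p => p.1 ≠ p.2 ∧ nint (x p.1 - x p.2) < r)).card

/-- Star-discrepancy of the first `N` points of a sequence in `[0,1)`. -/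
noncomputable def starDiscrepancy (N : ℕ) (x : ℕ → ℝ) : ℝ :=
  sSup {v : ℝ | ∃ b : ℝ, 0 < b ∧ b ≤ 1 ∧
    v = |(((Finset.Icc 1 N).filter (fun n => 0 ≤ x n ∧ x n < b)).card : ℝ) / N - b|}

section Aux

lemma nint_le' (x : ℝ) (k : ℤ) : nint x ≤ |x - (k : ℝ)| := by
  apply ciInf_le ⟨0, ?_⟩
  rintro y ⟨j, rfl⟩; positivity

lemma nint_nonneg' (x : ℝ) : 0 ≤ nint x := by
  apply le_ciInf; intro k; positivity

/-- window indicator: is interval `j` within the length-`w` window starting at `t` (cyclically)? -/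
def ind (m w j t : ℕ) : ℕ := if (j + (m - t)) % m < w then 1 else 0

def mu (m w j k : ℕ) : ℕ := ∑ t ∈ Finset.range m, ind m w j t * ind m w k t

lemma sub_mod_eval (m j t : ℕ) (hj : j < m) (ht : t < m) :
    (j + (m - t)) % m = if t ≤ j then j - t else j + m - t := by
  rcases le_or_gt t j with h | h
  · have : j + (m - t) = m + (j - t) := by omega
    rw [this, Nat.add_mod_left, Nat.mod_eq_of_lt (by omega)]
    simp [h]
  · rw [Nat.mod_eq_of_lt (by omega)]
    have : ¬ (t ≤ j) := by omega
    simp [this]; omega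

lemma invol (m j : ℕ) (hj : j < m) (t : ℕ) (ht : t < m) :
    (j + (m - (j + (m - t)) % m)) % m = t := by
  rw [sub_mod_eval m j t hj ht]
  split_ifs with h
  · rw [sub_mod_eval m j (j - t) hj (by omega)]
    simp [show j - t ≤ j by omega]; omega
  · rw [sub_mod_eval m j (j + m - t) hj (by omega)]
    have : ¬ (j + m - t ≤ j) := by omega
    simp [this]; omega

lemma mod_two_cases (m a : ℕ) (hm : 0 < m) (h : a < 2*m) :
    a % m = if a < m then a else a - m := by
  rcases lt_or_ge a m with h1 | h1
  · rw [Nat.mod_eq_of_lt h1]; simp [h1]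
  · have : a = m + (a - m) := by omega
    rw [this, Nat.add_mod_left, Nat.mod_eq_of_lt (by omega)]
    split_ifs <;> omega

lemma transform (m j k t : ℕ) (hj : j < m) (hk : k < m) (ht : t < m) :
    (k + (m - t)) % m = ((k + (m - j)) % m + (j + (m - t)) % m) % m := by
  have hm : 0 < m := by omega
  rw [sub_mod_eval m k t hk ht, sub_mod_eval m k j hk hj, sub_mod_eval m j t hj ht]
  split_ifs with h1 h2 h3 h2 h3 <;>
    rw [mod_two_cases m _ hm (by omega)] <;> split_ifs <;> omega

lemma window_count (m w d : ℕ) (hw : 0 < w) (hm : 2*w ≤ m) (hd : d < m) :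
    ∑ u ∈ Finset.range m, ((if u < w then 1 else 0) * (if (d + u) % m < w then 1 else 0) : ℕ)
      = w - min d (m - d) := by
  have hsub : Finset.range w ⊆ Finset.range m := by
    apply Finset.range_subset_range.2; omega
  rw [← Finset.sum_subset hsub (by intro u hu hnu; simp at hnu ⊢; intro h; omega)]
  have hrw : ∀ u ∈ Finset.range w,
      ((if u < w then 1 else 0) * (if (d + u) % m < w then 1 else 0) : ℕ)
      = (if (d + u) % m < w then 1 else 0) := by
    intro u hu; simp at hu; simp [hu]
  rw [Finset.sum_congr rfl hrw]
  rcases lt_or_ge d w with h1 | h1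
  · have : ∀ u ∈ Finset.range w,
        ((if (d + u) % m < w then 1 else 0) : ℕ) = if u < w - d then 1 else 0 := by
      intro u hu; simp at hu
      rw [Nat.mod_eq_of_lt (by omega)]
      congr 1; simp only [eq_iff_iff]; omega
    rw [Finset.sum_congr rfl this, Finset.sum_boole]
    have : Finset.filter (fun u => u < w - d) (Finset.range w) = Finset.range (w - d) := by
      ext u; simp; omega
    rw [this]; simp; omega
  · rcases le_or_gt (d + w) m with h2 | h2
    · have : ∀ u ∈ Finset.range w, ((if (d + u) % m < w then 1 else 0) : ℕ) = 0 := by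
        intro u hu; simp at hu
        rw [Nat.mod_eq_of_lt (by omega)]
        simp; omega
      rw [Finset.sum_congr rfl this]; simp; omega
    · have : ∀ u ∈ Finset.range w,
          ((if (d + u) % m < w then 1 else 0) : ℕ) = if m - d ≤ u then 1 else 0 := by
        intro u hu; simp at hu
        rw [mod_two_cases m _ (by omega) (by omega)]
        split_ifs with ha hb hb <;> first | rfl | omega
      rw [Finset.sum_congr rfl this, Finset.sum_boole]
      have : Finset.filter (fun u => m - d ≤ u) (Finset.range w) = Finset.Ico (m - d) w := by
        ext u; simp; omega
      rw [this]; simp [Nat.card_Ico]; omega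

lemma mu_eval (m w j k : ℕ) (hw : 0 < w) (hm : 2*w ≤ m) (hj : j < m) (hk : k < m) :
    mu m w j k = w - min ((k + (m - j)) % m) (m - (k + (m - j)) % m) := by
  have hm0 : 0 < m := by omega
  set dv := (k + (m - j)) % m with hdv
  have hdvm : dv < m := Nat.mod_lt _ hm0
  rw [← window_count m w dv hw hm hdvm]
  unfold mu
  apply Finset.sum_nbij' (fun t => (j + (m - t)) % m) (fun u => (j + (m - u)) % m)
  · intro t ht; simp at ht ⊢; exact Nat.mod_lt _ hm0
  · intro u hu; simp at hu ⊢; exact Nat.mod_lt _ hm0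
  · intro t ht; simp at ht; exact invol m j hj t ht
  · intro u hu; simp at hu; exact invol m j hj u hu
  · intro t ht; simp at ht
    unfold ind
    rw [← transform m j k t hj hk ht]

lemma dv_dist (m j k : ℕ) (hj : j < m) (hk : k < m) :
    min ((k + (m - j)) % m) (m - (k + (m - j)) % m)
      = min ((j - k) + (k - j)) (m - ((j - k) + (k - j))) := by
  rcases le_or_gt j k with h | h
  · have e : k + (m - j) = m + (k - j) := by omega
    rw [e, Nat.add_mod_left, Nat.mod_eq_of_lt (by omega)]
    omega
  · have e : (k + (m - j)) % m = k + m - j := by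
      rw [Nat.mod_eq_of_lt (by omega)]; omega
    rw [e]; omega

lemma mu_eval' (m w j k : ℕ) (hw : 0 < w) (hm : 2*w ≤ m) (hj : j < m) (hk : k < m) :
    mu m w j k = w - min ((j - k) + (k - j)) (m - ((j - k) + (k - j))) := by
  rw [mu_eval m w j k hw hm hj hk, dv_dist m j k hj hk]

lemma sum_ind (m w j : ℕ) (hw : 0 < w) (hm : 2*w ≤ m) (hj : j < m) :
    ∑ t ∈ Finset.range m, ind m w j t = w := by
  have h1 : ∀ t, ind m w j t * ind m w j t = ind m w j t := by
    intro t; unfold ind; split_ifs <;> rfl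
  have h2 : ∑ t ∈ Finset.range m, ind m w j t = mu m w j j := by
    unfold mu
    exact Finset.sum_congr rfl (fun t _ => (h1 t).symm)
  rw [h2, mu_eval' m w j j hw hm hj hj]; omega

lemma sum_ind_subset (m w j : ℕ) (hw : 0 < w) (hm : 2*w ≤ m) (hj : j < m)
    (G : Finset ℕ) (hG : G ⊆ Finset.range m)
    (hcov : ∀ t, t < m → (j + (m - t)) % m < w → t ∈ G) :
    ∑ t ∈ G, ind m w j t = w := by
  have heq : ∑ t ∈ G, ind m w j t = ∑ t ∈ Finset.range m, ind m w j t := by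
    apply Finset.sum_subset hG
    intro t ht hnt
    simp only [Finset.mem_range] at ht
    unfold ind
    split_ifs with h
    · exact absurd (hcov t ht h) hnt
    · rfl
  rw [heq, sum_ind m w j hw hm hj]

lemma sum_sq_to_pairs (A B : Finset ℕ) (f : ℕ → ℕ → ℕ) :
    ∑ t ∈ B, (∑ n ∈ A, f n t)^2 = ∑ p ∈ A ×ˢ A, ∑ t ∈ B, f p.1 t * f p.2 t := by
  have h : ∀ t, (∑ n ∈ A, f n t)^2 = ∑ p ∈ A ×ˢ A, f p.1 t * f p.2 t := by
    intro t
    rw [sq, Finset.sum_mul_sum]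
    rw [Finset.sum_product]
  simp_rw [h]
  exact Finset.sum_comm

lemma nint_bound (P : ℝ) (m : ℕ) (hP1 : 1 ≤ P) (hPm : P ≤ m) (u v : ℝ) (j k : ℕ)
    (hj : j < m) (hk : k < m)
    (hju : (j:ℝ) ≤ u*P) (hju' : u*P < j+1)
    (hkv : (k:ℝ) ≤ v*P) (hkv' : v*P < k+1)
    (hu1 : u < 1) (hv1 : v < 1) :
    nint (u - v) * P < ((min ((j-k)+(k-j)) (m - ((j-k)+(k-j))) : ℕ) : ℝ) + 1 := by
  have hP0 : (0:ℝ) < P := by linarith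
  set d : ℕ := (j-k)+(k-j) with hd
  have hdm : d < m := by omega
  have hc1 : (j:ℝ) ≤ (k:ℝ) + d := by
    have : j ≤ k + d := by omega
    exact_mod_cast this
  have hc2 : (k:ℝ) ≤ (j:ℝ) + d := by
    have : k ≤ j + d := by omega
    exact_mod_cast this
  have hj0 : (0:ℝ) ≤ (j:ℝ) := Nat.cast_nonneg j
  have hk0 : (0:ℝ) ≤ (k:ℝ) := Nat.cast_nonneg k
  have hu0 : 0 ≤ u := by
    by_contra h
    push_neg at h
    have : u * P < 0 := mul_neg_of_neg_of_pos h hP0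
    linarith
  have hv0 : 0 ≤ v := by
    by_contra h
    push_neg at h
    have : v * P < 0 := mul_neg_of_neg_of_pos h hP0
    linarith
  have hnn : 0 ≤ nint (u - v) := nint_nonneg' _
  have hb0 : nint (u - v) ≤ |u - v| := by simpa using nint_le' (u - v) 0
  have b1 : nint (u - v) * P < (d:ℝ) + 1 := by
    have habs : |u - v| * P < (d:ℝ) + 1 := by
      have e1 : (u - v) * P = u*P - v*P := by ring
      rcases abs_cases (u - v) with ⟨he, _⟩ | ⟨he, _⟩ <;> rw [he]
      · rw [e1]; linarith
      · have : (-(u-v))*P = v*P - u*P := by ring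
        rw [this]; linarith
    have := mul_le_mul_of_nonneg_right hb0 (le_of_lt hP0)
    linarith
  have b2 : nint (u - v) * P < (m:ℝ) - (d:ℝ) + 1 := by
    rcases le_or_gt k j with hkj | hjk
    · have hdj : (j:ℝ) = (k:ℝ) + d := by
        have : j = k + d := by omega
        exact_mod_cast this
      have h1 : nint (u - v) ≤ |u - v - 1| := by simpa using nint_le' (u - v) 1
      have he : |u - v - 1| = 1 - u + v := by
        rw [abs_of_nonpos (by linarith)]; ring
      have hexp : (1 - u + v) * P = P - u*P + v*P := by ring
      have h2 : (1 - u + v) * P < (m:ℝ) - d + 1 := by rw [hexp]; linarith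
      have h3 := mul_le_mul_of_nonneg_right h1 (le_of_lt hP0)
      rw [he] at h3
      linarith
    · have hdk : (k:ℝ) = (j:ℝ) + d := by
        have : k = j + d := by omega
        exact_mod_cast this
      have h1 : nint (u - v) ≤ |u - v + 1| := by
        have := nint_le' (u - v) (-1)
        push_cast at this
        convert this using 2
        ring
      have he : |u - v + 1| = u - v + 1 := abs_of_nonneg (by linarith)
      have hexp : (u - v + 1) * P = u*P - v*P + P := by ring
      have h2 : (u - v + 1) * P < (m:ℝ) - d + 1 := by rw [hexp]; linarith
      have h3 := mul_le_mul_of_nonneg_right h1 (le_of_lt hP0)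
      rw [he] at h3
      linarith
  have hcast : ((min d (m - d) : ℕ) : ℝ) = min (d:ℝ) ((m:ℝ) - d) := by
    push_cast [Nat.cast_sub (le_of_lt hdm)]
    rfl
  rw [hcast]
  rcases le_total (d:ℝ) ((m:ℝ) - d) with h | h
  · rw [min_eq_left h]; exact b1
  · rw [min_eq_right h]; exact b2

lemma engel2 (m1 m2 S1 S2 A1 A2 : ℝ) (hm1 : 0 < m1) (hm2 : 0 < m2)
    (h1 : S1^2 ≤ m1*A1) (h2 : S2^2 ≤ m2*A2) :
    (S1+S2)^2 + 4*(S1 - m1*(S1+S2)/(m1+m2))^2 ≤ (m1+m2)*(A1+A2) := by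
  have hm : 0 < m1 + m2 := by linarith
  set X : ℝ := S1 - m1*(S1+S2)/(m1+m2) with hXdef
  have hX : X * (m1+m2) = S1*m2 - S2*m1 := by
    rw [hXdef, sub_mul, div_mul_cancel₀ _ (ne_of_gt hm)]; ring
  have hX2 : X^2 * (m1+m2)^2 = (S1*m2 - S2*m1)^2 := by
    rw [← hX]; ring
  have key : ((S1+S2)^2 + 4*X^2) * (m1*m2) ≤ (m1+m2) * (S1^2*m2 + S2^2*m1) := by
    have h4 : 4*(m1*m2) ≤ (m1+m2)^2 := by nlinarith [sq_nonneg (m1-m2)]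
    have hid : (m1+m2) * (S1^2*m2 + S2^2*m1) * (m1+m2)^2
        = (S1+S2)^2*(m1*m2)*(m1+m2)^2 + (S1*m2-S2*m1)^2*(m1+m2)^2 := by ring
    have h5 : ((S1+S2)^2 + 4*X^2) * (m1*m2) * (m1+m2)^2
        = (S1+S2)^2*(m1*m2)*(m1+m2)^2 + 4*(S1*m2-S2*m1)^2*(m1*m2) := by
      rw [← hX2]; ring
    have h6 : 4*(S1*m2-S2*m1)^2*(m1*m2) ≤ (S1*m2-S2*m1)^2*(m1+m2)^2 := by
      nlinarith [sq_nonneg (S1*m2-S2*m1), sq_nonneg (m1-m2), mul_pos hm1 hm2]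
    nlinarith [sq_nonneg (m1+m2), mul_pos hm1 hm2, sq_nonneg X]
  have hA : (m1+m2) * (S1^2*m2 + S2^2*m1) ≤ (m1+m2)*(A1+A2)*(m1*m2) := by
    have e1 : S1^2*m2 ≤ m1*A1*m2 := mul_le_mul_of_nonneg_right h1 (le_of_lt hm2)
    have e2 : S2^2*m1 ≤ m2*A2*m1 := mul_le_mul_of_nonneg_right h2 (le_of_lt hm1)
    nlinarith [hm]
  have := key.trans hA
  exact le_of_mul_le_mul_right (by linarith) (mul_pos hm1 hm2)

end Aux
theorem stmt4 (x : ℕ → ℝ) (hx : ∀ n, x n ∈ Set.Ico (0 : ℝ) 1)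
    (α : ℝ) (hα0 : 0 < α) (hα1 : α ≤ 1)
    (F : ℕ × ℕ → ℝ)
    (hFmono : ∀ K₁ K₂ N : ℕ, K₁ ≤ K₂ → F (K₁, N) ≤ F (K₂, N))
    (hF : ∀ N K : ℕ, 1 ≤ K → (K : ℝ) ≤ (N : ℝ) / 2 →
      ∀ s : ℕ, 1 ≤ s → s ≤ K →
        |(1 / (2 * (s : ℝ))) * (pairCountLt x N ((s : ℝ) / (N : ℝ) ^ α) : ℝ)
          - (N : ℝ) ^ ((2 : ℝ) - α)| < F (K, N)) :
    ∃ N₀ : ℕ, 0 < N₀ ∧ ∀ N : ℕ, N₀ ≤ N → ∀ K : ℕ,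
      (1 / 2) * (N : ℝ) ^ ((2 / 5) * α) ≤ (K : ℝ) → (K : ℝ) ≤ (N : ℝ) ^ ((2 / 5) * α) →
      (N : ℝ) ^ α * starDiscrepancy N x ≤
        5 * max ((N : ℝ) ^ (1 - (1 / 5) * α))
          (Real.sqrt ((N : ℝ) ^ α * F (K ^ 2, N))) := by
  refine ⟨10^6, by norm_num, ?_⟩
  intro N hN K hK1 hK2
  have hNr6 : ((10:ℝ)^6) ≤ (N:ℝ) := by exact_mod_cast hN
  set Nr : ℝ := (N:ℝ) with hNrdef
  have hNr1 : (1:ℝ) ≤ Nr := by norm_num at hNr6 ⊢; linarith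
  have hNpos : (0:ℝ) < Nr := by linarith
  set P : ℝ := Nr ^ α with hPdef
  have hP1 : 1 ≤ P := Real.one_le_rpow hNr1 (le_of_lt hα0)
  have hPpos : 0 < P := by linarith
  have hPN : P ≤ Nr := by
    calc P ≤ Nr ^ (1:ℝ) := Real.rpow_le_rpow_of_exponent_le hNr1 hα1
    _ = Nr := Real.rpow_one Nr
  -- the discrepancy set
  set Sset : Set ℝ := {v : ℝ | ∃ b : ℝ, 0 < b ∧ b ≤ 1 ∧
    v = |(((Finset.Icc 1 N).filter (fun n => 0 ≤ x n ∧ x n < b)).card : ℝ) / N - b|}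
    with hSsetdef
  have hDdef : starDiscrepancy N x = sSup Sset := rfl
  set D : ℝ := starDiscrepancy N x with hDD
  have hSne : Sset.Nonempty := by
    refine ⟨_, ⟨1, by norm_num, le_refl 1, rfl⟩⟩
  have hSbdd : ∀ v ∈ Sset, v ≤ 1 := by
    rintro v ⟨b, hb0, hb1, rfl⟩
    have hcard : (((Finset.Icc 1 N).filter (fun n => 0 ≤ x n ∧ x n < b)).card : ℝ) ≤ Nr := by
      have h1 : ((Finset.Icc 1 N).filter (fun n => 0 ≤ x n ∧ x n < b)).card ≤ N := by
        calc _ ≤ (Finset.Icc 1 N).card := Finset.card_filter_le _ _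
        _ = N := by rw [Nat.card_Icc]; omega
      rw [hNrdef]
      exact_mod_cast h1
    have hcard0 : (0:ℝ) ≤ (((Finset.Icc 1 N).filter (fun n => 0 ≤ x n ∧ x n < b)).card : ℝ) :=
      Nat.cast_nonneg _
    rw [abs_le]
    constructor
    · have : (0:ℝ) ≤ (((Finset.Icc 1 N).filter (fun n => 0 ≤ x n ∧ x n < b)).card : ℝ) / Nr := by
        positivity
      linarith
    · have : (((Finset.Icc 1 N).filter (fun n => 0 ≤ x n ∧ x n < b)).card : ℝ) / Nr ≤ 1 := by
        rw [div_le_one hNpos]; exact hcard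
      linarith
  have hBdd : BddAbove Sset := ⟨1, fun v hv => hSbdd v hv⟩
  have hD1 : D ≤ 1 := by
    rw [hDdef]
    exact csSup_le hSne hSbdd
  -- case split on α
  rcases le_or_gt α (5/6) with hc | hc
  · -- trivial case
    have hDub : P * D ≤ P := by
      have : P * D ≤ P * 1 := by
        apply mul_le_mul_of_nonneg_left hD1 (le_of_lt hPpos)
      linarith
    have h2 : P ≤ Nr ^ (1 - (1/5)*α) := by
      apply Real.rpow_le_rpow_of_exponent_le hNr1
      linarith
    have h3 : Nr ^ (1 - (1/5)*α) ≤ max (Nr ^ (1 - (1/5)*α)) (Real.sqrt (P * F (K^2, N))) :=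
      le_max_left _ _
    have h4 : (0:ℝ) ≤ Nr ^ (1 - (1/5)*α) := Real.rpow_nonneg (le_of_lt hNpos) _
    have : P * D ≤ max (Nr ^ (1 - (1/5)*α)) (Real.sqrt (P * F (K^2, N))) := by linarith
    nlinarith [le_max_left (Nr ^ (1 - (1/5)*α)) (Real.sqrt (P * F (K^2, N)))]
  · -- main case
    by_contra hcon
    push_neg at hcon
    -- scalar setup
    set Q : ℝ := Nr ^ (α/5) with hQdef
    have hQ5 : Q^5 = P := by
      rw [hQdef, hPdef, ← Real.rpow_natCast (Nr ^ (α/5)) 5, ← Real.rpow_mul hNpos.le]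
      congr 1; push_cast; ring
    have hQ2 : Nr ^ ((2/5)*α) = Q^2 := by
      rw [hQdef, ← Real.rpow_natCast (Nr ^ (α/5)) 2, ← Real.rpow_mul hNpos.le]
      congr 1; push_cast; ring
    have hQ10 : (10:ℝ) ≤ Q := by
      have h10 : ((10:ℝ)^(6:ℕ))^((1:ℝ)/6) = 10 := by
        rw [← Real.rpow_natCast (10:ℝ) 6, ← Real.rpow_mul (by norm_num)]
        norm_num
      have h1 : ((10:ℝ)^(6:ℕ))^((1:ℝ)/6) ≤ Nr ^ ((1:ℝ)/6) := by
        apply Real.rpow_le_rpow (by positivity) (by exact_mod_cast hNr6) (by norm_num)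
      have h2 : Nr ^ ((1:ℝ)/6) ≤ Nr ^ (α/5) := by
        apply Real.rpow_le_rpow_of_exponent_le hNr1
        linarith
      rw [h10] at h1
      rw [hQdef]; linarith
    have hQpos : (0:ℝ) < Q := by linarith
    -- K and w
    set w : ℕ := K^2 with hwdef
    have hwR : ((w:ℕ):ℝ) = (K:ℝ)^2 := by rw [hwdef]; push_cast; ring
    have hK0 : (0:ℝ) < (K:ℝ) := lt_of_lt_of_le (by positivity) hK1
    have hKQ : (K:ℝ) ≤ Q^2 := by rw [hQ2] at hK2; exact hK2
    have hKQ' : Q^2 ≤ 2*(K:ℝ) := by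
      rw [hQ2] at hK1; linarith
    have hw1 : 1 ≤ w := by
      have hKn : 0 < K := by exact_mod_cast hK0
      rw [hwdef]
      exact Nat.one_le_pow _ _ hKn
    have hw0 : 0 < w := hw1
    have hwQ4 : (w:ℝ) ≤ Q^4 := by
      rw [hwR]
      calc (K:ℝ)^2 ≤ (Q^2)^2 := pow_le_pow_left₀ hK0.le hKQ 2
        _ = Q^4 := by ring
    have hwQ4' : Q^4 ≤ 4*(w:ℝ) := by
      rw [hwR]
      calc Q^4 = (Q^2)^2 := by ring
        _ ≤ (2*(K:ℝ))^2 := pow_le_pow_left₀ (by positivity) hKQ' 2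
        _ = 4*(K:ℝ)^2 := by ring
    have hw1R : (1:ℝ) ≤ (w:ℝ) := by exact_mod_cast hw1
    have hQ4nn : (0:ℝ) ≤ Q^4 := by positivity
    have hQ4P : Q^4 * Q = P := by rw [← hQ5]; ring
    have hwP : (w:ℝ) * Q ≤ P := by
      rw [← hQ4P]
      exact mul_le_mul_of_nonneg_right hwQ4 hQpos.le
    have hwnn : (0:ℝ) ≤ (w:ℝ) := by linarith
    -- w ≤ N/2
    have hwhalf : (w:ℝ) ≤ Nr / 2 := by
      have h1 : (w:ℝ)*10 ≤ (w:ℝ)*Q := mul_le_mul_of_nonneg_left hQ10 hwnn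
      linarith
    -- contradiction hypotheses extracted
    have hmax1 : 5 * Nr ^ (1 - (1/5)*α) < P * D := by
      have h := le_max_left (Nr ^ (1 - (1/5)*α)) (Real.sqrt (P * F (w, N)))
      linarith [hcon]
    have hrpos : (0:ℝ) < Nr ^ (1 - (1/5)*α) := Real.rpow_pos_of_pos hNpos _
    have hDpos : 0 < D := by
      by_contra h
      push_neg at h
      have : P * D ≤ 0 := mul_nonpos_of_nonneg_of_nonpos hPpos.le h
      linarith
    have hDQ : 5 * Nr < D * P * Q := by
      have hQmul : Nr ^ (1 - (1/5)*α) * Q = Nr := by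
        rw [hQdef, ← Real.rpow_add hNpos]
        rw [show (1 - (1/5)*α + α/5) = (1:ℝ) by ring, Real.rpow_one]
      have := mul_lt_mul_of_pos_right hmax1 hQpos
      calc 5 * Nr = 5 * (Nr ^ (1 - (1/5)*α) * Q) := by rw [hQmul]
        _ = 5 * Nr ^ (1 - (1/5)*α) * Q := by ring
        _ < P * D * Q := this
        _ = D * P * Q := by ring
    have hDQ5 : 5 < D * Q := by
      have h' : 5 * P < (D*Q) * P := by
        have he : D*P*Q = (D*Q)*P := by ring
        linarith [hDQ, hPN]
      exact lt_of_mul_lt_mul_right (by linarith) hPpos.le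
    have hFb : F (w, N) < D^2 * P / 25 := by
      have hsq : Real.sqrt (P * F (w, N)) < P * D / 5 := by
        have h := le_max_right (Nr ^ (1 - (1/5)*α)) (Real.sqrt (P * F (w, N)))
        linarith [hcon]
      have hy : (0:ℝ) < P * D / 5 := by positivity
      have h2 := (Real.sqrt_lt' hy).1 hsq
      have h3 : (P*D/5)^2 = P*(D^2*P/25) := by ring
      exact (mul_lt_mul_iff_right₀ hPpos).mp (by linarith)
    -- grid setup
    set m : ℕ := ⌈P⌉₊ with hmdef
    have hmP : P ≤ (m:ℝ) := Nat.le_ceil P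
    have hmP' : (m:ℝ) ≤ P + 1 := (Nat.ceil_lt_add_one hPpos.le).le
    have hm2w : 2*w ≤ m := by
      have ha : 2*Q^4 ≤ Q^4*10 := by linarith
      have hb : Q^4*10 ≤ Q^4*Q := mul_le_mul_of_nonneg_left hQ10 hQ4nn
      have h1 : 2*(w:ℝ) ≤ P := by linarith
      have h2 : ((2*w : ℕ):ℝ) ≤ (m:ℝ) := by push_cast; linarith
      exact_mod_cast h2
    have hm0 : 0 < m := by omega
    -- index of each point
    set idx : ℕ → ℕ := fun n => ⌊x n * P⌋₊ with hidxdef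
    have hxnn : ∀ n, 0 ≤ x n := fun n => (hx n).1
    have hx1 : ∀ n, x n < 1 := fun n => (hx n).2
    have hidxlt : ∀ n, idx n < m := by
      intro n
      rw [hidxdef]
      have hxP : x n * P < (m:ℝ) := by
        have : x n * P < 1 * P := by
          apply mul_lt_mul_of_pos_right (hx1 n) hPpos
        linarith
      exact Nat.floor_lt (mul_nonneg (hxnn n) hPpos.le) |>.2 hxP
    have hidxle : ∀ n, ((idx n : ℕ):ℝ) ≤ x n * P := by
      intro n; rw [hidxdef]; exact Nat.floor_le (mul_nonneg (hxnn n) hPpos.le)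
    have hidxlt1 : ∀ n, x n * P < (idx n : ℕ) + 1 := by
      intro n; rw [hidxdef]; exact Nat.lt_floor_add_one _
    set T := (Finset.Icc 1 N) ×ˢ (Finset.Icc 1 N) with hTdef
    set Dt : ℕ → ℕ := fun t => ∑ n ∈ Finset.Icc 1 N, ind m w (idx n) t with hDtdef
    set wgt : ℕ × ℕ → ℕ :=
      fun p => min ((idx p.1 - idx p.2) + (idx p.2 - idx p.1))
        (m - ((idx p.1 - idx p.2) + (idx p.2 - idx p.1))) with hwgtdef
    have hNcard : (Finset.Icc 1 N).card = N := by rw [Nat.card_Icc]; omega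
    -- sum of squares equals pair sum of mu
    have hsq : ∑ t ∈ Finset.range m, (Dt t)^2 = ∑ p ∈ T, mu m w (idx p.1) (idx p.2) := by
      rw [hDtdef, hTdef]
      exact sum_sq_to_pairs (Finset.Icc 1 N) (Finset.range m) (fun n t => ind m w (idx n) t)
    -- diag bound
    have hdiag : ∑ p ∈ T, mu m w (idx p.1) (idx p.2)
        ≤ w * N + ∑ p ∈ T.filter (fun p => p.1 ≠ p.2), (w - wgt p) := by
      rw [← Finset.sum_filter_add_sum_filter_not T (fun p => p.1 = p.2)]
      have part1 : ∑ p ∈ T.filter (fun p => p.1 = p.2), mu m w (idx p.1) (idx p.2) ≤ w * N := by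
        have h1 : ∀ p ∈ T.filter (fun p => p.1 = p.2), mu m w (idx p.1) (idx p.2) ≤ w := by
          intro p _
          rw [mu_eval' m w _ _ hw0 hm2w (hidxlt _) (hidxlt _)]
          omega
        calc ∑ p ∈ T.filter (fun p => p.1 = p.2), mu m w (idx p.1) (idx p.2)
            ≤ (T.filter (fun p => p.1 = p.2)).card * w := by
              have := Finset.sum_le_card_nsmul (T.filter (fun p => p.1 = p.2))
                (fun p => mu m w (idx p.1) (idx p.2)) w h1
              simpa [smul_eq_mul] using this
          _ ≤ N * w := by
              have hcd : (T.filter (fun p => p.1 = p.2)).card ≤ N := by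
                have : (T.filter (fun p => p.1 = p.2)).card ≤ (Finset.Icc 1 N).card := by
                  apply Finset.card_le_card_of_injOn (fun p => p.1)
                  · intro p hp
                    simp only [hTdef, Finset.mem_coe, Finset.mem_filter, Finset.mem_product] at hp
                    exact hp.1.1
                  · intro p hp q hq hpq
                    simp only [hTdef, Finset.mem_coe, Finset.mem_filter, Finset.mem_product] at hp hq
                    have hpq' : p.1 = q.1 := hpq
                    have : p.2 = q.2 := by rw [← hp.2, ← hq.2, hpq']
                    exact Prod.ext hpq' this
                omega
              exact Nat.mul_le_mul_right w hcd
          _ = w * N := Nat.mul_comm N w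
      have part2 : ∑ p ∈ T.filter (fun p => p.1 ≠ p.2), mu m w (idx p.1) (idx p.2)
          = ∑ p ∈ T.filter (fun p => p.1 ≠ p.2), (w - wgt p) := by
        apply Finset.sum_congr rfl
        intro p _
        rw [mu_eval' m w _ _ hw0 hm2w (hidxlt _) (hidxlt _), hwgtdef]
      exact add_le_add part1 (le_of_eq part2)
    -- rewrite weight sum as sum over s of cardinalities
    have hwgtsum : ∑ p ∈ T.filter (fun p => p.1 ≠ p.2), (w - wgt p)
        = ∑ s ∈ Finset.Icc 1 w, (T.filter (fun p => p.1 ≠ p.2 ∧ wgt p < s)).card := by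
      have h1 : ∀ s : ℕ, T.filter (fun p => p.1 ≠ p.2 ∧ wgt p < s)
          = (T.filter (fun p => p.1 ≠ p.2)).filter (fun p => wgt p < s) := by
        intro s; rw [Finset.filter_filter]
      calc ∑ p ∈ T.filter (fun p => p.1 ≠ p.2), (w - wgt p)
          = ∑ p ∈ T.filter (fun p => p.1 ≠ p.2),
              ∑ s ∈ Finset.Icc 1 w, (if wgt p < s then 1 else 0) := by
            apply Finset.sum_congr rfl
            intro p _
            rw [← Finset.card_filter]
            have he : Finset.filter (fun s => wgt p < s) (Finset.Icc 1 w)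
                = Finset.Icc (wgt p + 1) w := by
              ext s; simp [Finset.mem_Icc]; omega
            rw [he, Nat.card_Icc]; omega
        _ = ∑ s ∈ Finset.Icc 1 w,
              ∑ p ∈ T.filter (fun p => p.1 ≠ p.2), (if wgt p < s then 1 else 0) :=
            Finset.sum_comm
        _ = _ := by
            apply Finset.sum_congr rfl
            intro s _
            rw [← Finset.card_filter, h1 s]
    -- cardinality vs pairCountLt
    have hQle : ∀ s, (T.filter (fun p => p.1 ≠ p.2 ∧ wgt p < s)).card
        ≤ pairCountLt x N ((s:ℝ)/P) := by
      intro s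
      unfold pairCountLt
      apply Finset.card_le_card
      intro p hp
      simp only [Finset.mem_filter] at hp ⊢
      refine ⟨hp.1, hp.2.1, ?_⟩
      have hwgtlt : min ((idx p.1 - idx p.2) + (idx p.2 - idx p.1))
          (m - ((idx p.1 - idx p.2) + (idx p.2 - idx p.1))) < s := hp.2.2
      have hb := nint_bound P m hP1 hmP (x p.1) (x p.2) (idx p.1) (idx p.2)
        (hidxlt _) (hidxlt _) (hidxle _) (hidxlt1 _) (hidxle _) (hidxlt1 _)
        (hx1 p.1) (hx1 p.2)
      have hcast : ((min ((idx p.1 - idx p.2) + (idx p.2 - idx p.1))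
          (m - ((idx p.1 - idx p.2) + (idx p.2 - idx p.1))) : ℕ):ℝ) + 1 ≤ (s:ℝ) := by
        have h2 : (min ((idx p.1 - idx p.2) + (idx p.2 - idx p.1))
            (m - ((idx p.1 - idx p.2) + (idx p.2 - idx p.1))) : ℕ) + 1 ≤ s := hwgtlt
        exact_mod_cast h2
      rw [lt_div_iff₀ hPpos]
      linarith [hb, hcast]
    -- Gauss sum
    have hGaussN : (∑ s ∈ Finset.Icc 1 w, s) * 2 = w * (w+1) := by
      have hins : Finset.range (w+1) = insert 0 (Finset.Icc 1 w) := by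
        ext s; simp [Finset.mem_Icc, Finset.mem_range]; omega
      have h0 : ∑ s ∈ Finset.range (w+1), s = ∑ s ∈ Finset.Icc 1 w, s := by
        rw [hins, Finset.sum_insert (by simp)]; omega
      have := Finset.sum_range_id_mul_two (w+1)
      rw [← h0, this, Nat.add_sub_cancel]
      exact Nat.mul_comm _ _
    have hGaussR : (∑ s ∈ Finset.Icc 1 w, (s:ℝ)) * 2 = (w:ℝ) * ((w:ℝ)+1) := by
      have : (((∑ s ∈ Finset.Icc 1 w, s) * 2 : ℕ) : ℝ) = ((w * (w+1) : ℕ):ℝ) := by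
        exact_mod_cast congrArg (Nat.cast : ℕ → ℝ) hGaussN
      push_cast at this
      linarith
    -- apply hF
    have hrp2 : Nr ^ ((2:ℝ) - α) = Nr^2 / P := by
      rw [hPdef, Real.rpow_sub hNpos]
      congr 1
      exact Real.rpow_two Nr
    have hpc : ∀ s ∈ Finset.Icc 1 w, (pairCountLt x N ((s:ℝ)/P) : ℝ)
        < 2*(s:ℝ)*(Nr^2/P + F (w, N)) := by
      intro s hs
      simp only [Finset.mem_Icc] at hs
      have hs1R : (1:ℝ) ≤ (s:ℝ) := by exact_mod_cast hs.1
      have happ := hF N w hw1 hwhalf s hs.1 hs.2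
      rw [← hNrdef, ← hPdef, hrp2] at happ
      have h1 := (abs_lt.1 happ).2
      have hspos : (0:ℝ) < 2*(s:ℝ) := by linarith
      have h2 : (1 / (2 * (s:ℝ))) * (pairCountLt x N ((s:ℝ)/P) : ℝ)
          < Nr^2/P + F (w, N) := by linarith
      have h3 := mul_lt_mul_of_pos_left h2 hspos
      have he : 2*(s:ℝ) * ((1 / (2 * (s:ℝ))) * (pairCountLt x N ((s:ℝ)/P) : ℝ))
          = (pairCountLt x N ((s:ℝ)/P) : ℝ) := by
        field_simp
      rw [he] at h3
      linarith
    have hpcsum : (∑ s ∈ Finset.Icc 1 w, (pairCountLt x N ((s:ℝ)/P) : ℝ))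
        < (Nr^2/P + F (w, N)) * ((w:ℝ) * ((w:ℝ)+1)) := by
      have hne : (Finset.Icc 1 w).Nonempty := by
        rw [Finset.nonempty_Icc]; omega
      have := Finset.sum_lt_sum_of_nonempty hne hpc
      calc (∑ s ∈ Finset.Icc 1 w, (pairCountLt x N ((s:ℝ)/P) : ℝ))
          < ∑ s ∈ Finset.Icc 1 w, 2*(s:ℝ)*(Nr^2/P + F (w, N)) := this
        _ = (∑ s ∈ Finset.Icc 1 w, (s:ℝ)) * 2 * (Nr^2/P + F (w, N)) := by
            rw [Finset.sum_mul, Finset.sum_mul]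
            apply Finset.sum_congr rfl
            intro s _; ring
        _ = _ := by rw [hGaussR]; ring
    -- master casted bound
    have hmaster : ((∑ t ∈ Finset.range m, (Dt t)^2 : ℕ) : ℝ)
        < (w:ℝ)*Nr + (Nr^2/P + F (w, N)) * ((w:ℝ) * ((w:ℝ)+1)) := by
      have hchainN : ∑ t ∈ Finset.range m, (Dt t)^2
          ≤ w * N + ∑ s ∈ Finset.Icc 1 w, pairCountLt x N ((s:ℝ)/P) := by
        rw [hsq]
        refine le_trans hdiag ?_
        rw [hwgtsum]
        exact Nat.add_le_add_left (Finset.sum_le_sum (fun s _ => hQle s)) _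
      have hcast : ((∑ t ∈ Finset.range m, (Dt t)^2 : ℕ) : ℝ)
          ≤ (w:ℝ)*Nr + ∑ s ∈ Finset.Icc 1 w, (pairCountLt x N ((s:ℝ)/P) : ℝ) := by
        rw [hNrdef]
        exact_mod_cast hchainN
      linarith
    -- total window sum
    have hDsumN : ∑ t ∈ Finset.range m, Dt t = N * w := by
      simp only [hDtdef]
      rw [Finset.sum_comm]
      calc ∑ n ∈ Finset.Icc 1 N, ∑ t ∈ Finset.range m, ind m w (idx n) t
          = ∑ n ∈ Finset.Icc 1 N, w :=
            Finset.sum_congr rfl (fun n _ => sum_ind m w (idx n) hw0 hm2w (hidxlt n))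
        _ = N * w := by rw [Finset.sum_const, hNcard, smul_eq_mul]
    -- discrepancy witness
    have hwit : ∃ bb : ℝ, 0 < bb ∧ bb ≤ 1 ∧ (9/10)*D <
        |((((Finset.Icc 1 N).filter (fun n => 0 ≤ x n ∧ x n < bb)).card : ℝ)) / (N:ℝ) - bb| := by
      obtain ⟨v, hvS, hvgt2⟩ := exists_lt_of_lt_csSup hSne
        (show (9/10)*D < sSup Sset by rw [← hDdef]; linarith)
      obtain ⟨bb, hbb0, hbb1, hveq⟩ := hvS
      exact ⟨bb, hbb0, hbb1, by rw [← hveq]; exact hvgt2⟩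
    obtain ⟨b, hb0, hb1, hvgt⟩ := hwit
    rw [← hNrdef] at hvgt
    set A : ℕ := ((Finset.Icc 1 N).filter (fun n => 0 ≤ x n ∧ x n < b)).card with hAdef
    have hAN : A ≤ N := by
      rw [hAdef]
      calc ((Finset.Icc 1 N).filter (fun n => 0 ≤ x n ∧ x n < b)).card
          ≤ (Finset.Icc 1 N).card := Finset.card_filter_le _ _
        _ = N := hNcard
    have hANR : (A:ℝ) ≤ Nr := by rw [hNrdef]; exact_mod_cast hAN
    have hA0 : (0:ℝ) ≤ (A:ℝ) := Nat.cast_nonneg _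
    have hEb : (9/10)*D*Nr < |(A:ℝ) - b*Nr| := by
      have h1 : |(A:ℝ)/Nr - b| * Nr = |(A:ℝ) - b*Nr| := by
        rw [show |(A:ℝ)/Nr - b| * Nr = |(A:ℝ)/Nr - b| * |Nr| by rw [abs_of_pos hNpos],
          ← abs_mul]
        congr 1
        field_simp
      have h2 := mul_lt_mul_of_pos_right hvgt hNpos
      rw [h1] at h2
      linarith
    -- B
    set B : ℕ := ⌈b*P⌉₊ with hBdef
    have hbP0 : 0 < b*P := mul_pos hb0 hPpos
    have hB1 : 0 < B := by rw [hBdef]; exact Nat.ceil_pos.2 hbP0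
    have hBge : b*P ≤ (B:ℝ) := Nat.le_ceil _
    have hBlt : (B:ℝ) < b*P + 1 := Nat.ceil_lt_add_one hbP0.le
    have hBm : B ≤ m := by
      rw [hBdef, hmdef]
      refine Nat.ceil_le_ceil ?_
      have hh := mul_le_mul_of_nonneg_right hb1 hPpos.le
      linarith only [hh]
    have hxbidx : ∀ n, x n < b → idx n < B := by
      intro n hxn
      have h1 : x n * P < b * P := mul_lt_mul_of_pos_right hxn hPpos
      have h2 : x n * P < (B:ℝ) := lt_of_lt_of_le h1 hBge
      simp only [hidxdef]
      exact (Nat.floor_lt (mul_nonneg (hxnn n) hPpos.le)).2 h2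
    have hidxb : ∀ n, idx n + 2 ≤ B → x n < b := by
      intro n h
      have h1 : ((idx n : ℕ):ℝ) + 2 ≤ (B:ℝ) := by exact_mod_cast h
      have h2 : x n * P < b * P := by linarith [hidxlt1 n, hBlt]
      exact lt_of_mul_lt_mul_right (by linarith) hPpos.le
    have hAgood : A ≤ ((Finset.Icc 1 N).filter (fun n => idx n < B)).card := by
      rw [hAdef]
      apply Finset.card_le_card
      intro n hn
      simp only [Finset.mem_filter] at hn ⊢
      exact ⟨hn.1, hxbidx n hn.2.2⟩
    have hAbad : N - A ≤ ((Finset.Icc 1 N).filter (fun n => ¬ (idx n + 2 ≤ B))).card := by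
      have hsplit := Finset.card_filter_add_card_filter_not
        (s := Finset.Icc 1 N) (p := fun n => idx n + 2 ≤ B)
      have hle : ((Finset.Icc 1 N).filter (fun n => idx n + 2 ≤ B)).card ≤ A := by
        rw [hAdef]
        apply Finset.card_le_card
        intro n hn
        simp only [Finset.mem_filter] at hn ⊢
        exact ⟨hn.1, hxnn n, hidxb n hn.2⟩
      omega
    -- key group existence
    have key : ∃ G1 : Finset ℕ, G1 ⊆ Finset.range m ∧ 0 < G1.card ∧ G1.card < m ∧
        (1/2)*(w:ℝ)*D*Nr ≤ (∑ t ∈ G1, (Dt t:ℝ)) - (G1.card:ℝ)*((w:ℝ)*Nr)/(m:ℝ) := by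
      have hwDnn : (0:ℝ) ≤ (w:ℝ)*Nr := by positivity
      have h5' : (w:ℝ)*((w:ℝ)*Nr)/P ≤ (w:ℝ)*Nr/Q := by
        rw [div_le_div_iff₀ hPpos hQpos]
        nlinarith only [mul_le_mul_of_nonneg_left hwP hwDnn]
      have h6' : (w:ℝ)*Nr/Q ≤ (2/5)*((w:ℝ)*D*Nr) := by
        rw [div_le_iff₀ hQpos]
        nlinarith only [mul_le_mul_of_nonneg_left hDQ5.le
          (show (0:ℝ) ≤ (2/5)*((w:ℝ)*Nr) by positivity), hwDnn]
      rcases le_or_gt (b*Nr) (A:ℝ) with hexc | hdefc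
      · -- excess case
        have hEx : (9/10)*D*Nr < (A:ℝ) - b*Nr := by
          rw [abs_of_nonneg (by linarith)] at hEb
          exact hEb
        have hBwm : B + w ≤ m := by
          by_contra hbad
          push_neg at hbad
          have h1 : (m:ℝ) < (B:ℝ) + (w:ℝ) := by
            have : (m:ℕ) < B + w := hbad
            exact_mod_cast this
          have he1 : (1-b)*P = P - b*P := by ring
          have h2 : (1-b)*P < 1 + (w:ℝ) := by linarith [hBlt, hmP]
          have c4 : (9/10)*D*Nr < (1-b)*Nr := by linarith only [hEx, hANR]
          have F1 := mul_lt_mul_of_pos_right h2 (mul_pos hNpos hQpos)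
          have F2 := mul_lt_mul_of_pos_right c4 (mul_pos hPpos hQpos)
          have F3 := mul_le_mul_of_nonneg_right hwP (show (0:ℝ) ≤ 2*Nr by positivity)
          have F4 := mul_lt_mul_of_pos_right hDQ (show (0:ℝ) < (9/10)*Nr by positivity)
          have F5 := mul_le_mul_of_nonneg_right hw1R (show (0:ℝ) ≤ Q*Nr by positivity)
          have F6 := mul_le_mul_of_nonneg_right hPN (show (0:ℝ) ≤ 2*Nr by positivity)
          nlinarith only [F1, F2, F3, F4, F5, F6, sq_nonneg Nr]
        refine ⟨(Finset.range m).filter (fun t => t < B ∨ m - w < t), Finset.filter_subset _ _,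
          ?_, ?_, ?_⟩
        · have hG1eq : (Finset.range m).filter (fun t => t < B ∨ m - w < t)
              = Finset.range B ∪ Finset.Ico (m - w + 1) m := by
            ext t
            simp only [Finset.mem_filter, Finset.mem_range, Finset.mem_union, Finset.mem_Ico]
            omega
          rw [hG1eq]
          have : 0 < (Finset.range B).card := by rw [Finset.card_range]; omega
          have hsub2 : Finset.range B ⊆ Finset.range B ∪ Finset.Ico (m - w + 1) m :=
            Finset.subset_union_left
          have := Finset.card_le_card hsub2
          omega
        · have hG1eq : (Finset.range m).filter (fun t => t < B ∨ m - w < t)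
              = Finset.range B ∪ Finset.Ico (m - w + 1) m := by
            ext t
            simp only [Finset.mem_filter, Finset.mem_range, Finset.mem_union, Finset.mem_Ico]
            omega
          have hdisj : Disjoint (Finset.range B) (Finset.Ico (m - w + 1) m) := by
            rw [Finset.disjoint_left]
            intro t ht ht2
            simp only [Finset.mem_range] at ht
            simp only [Finset.mem_Ico] at ht2
            omega
          rw [hG1eq, Finset.card_union_of_disjoint hdisj, Finset.card_range, Nat.card_Ico]
          omega
        · set G1 := (Finset.range m).filter (fun t => t < B ∨ m - w < t) with hG1def
          have hcardG1 : G1.card = B + (w - 1) := by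
            have hG1eq : G1 = Finset.range B ∪ Finset.Ico (m - w + 1) m := by
              rw [hG1def]
              ext t
              simp only [Finset.mem_filter, Finset.mem_range, Finset.mem_union, Finset.mem_Ico]
              omega
            have hdisj : Disjoint (Finset.range B) (Finset.Ico (m - w + 1) m) := by
              rw [Finset.disjoint_left]
              intro t ht ht2
              simp only [Finset.mem_range] at ht
              simp only [Finset.mem_Ico] at ht2
              omega
            rw [hG1eq, Finset.card_union_of_disjoint hdisj, Finset.card_range, Nat.card_Ico]
            omega
          -- lower bound on the group sum
          have hgoodsum : ∀ n ∈ (Finset.Icc 1 N).filter (fun n => idx n < B),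
              ∑ t ∈ G1, ind m w (idx n) t = w := by
            intro n hn
            simp only [Finset.mem_filter] at hn
            apply sum_ind_subset m w (idx n) hw0 hm2w (hidxlt n) G1
              (by rw [hG1def]; exact Finset.filter_subset _ _)
            intro t ht hcond
            rw [sub_mod_eval m (idx n) t (hidxlt n) ht] at hcond
            rw [hG1def]
            simp only [Finset.mem_filter, Finset.mem_range]
            split_ifs at hcond <;> omega
          have hS1g : w * A ≤ ∑ t ∈ G1, Dt t := by
            have hswap : ∑ t ∈ G1, Dt t
                = ∑ n ∈ Finset.Icc 1 N, ∑ t ∈ G1, ind m w (idx n) t := by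
              simp only [hDtdef]
              exact Finset.sum_comm
            have h1 : ∑ n ∈ (Finset.Icc 1 N).filter (fun n => idx n < B),
                (∑ t ∈ G1, ind m w (idx n) t)
                ≤ ∑ n ∈ Finset.Icc 1 N, ∑ t ∈ G1, ind m w (idx n) t :=
              Finset.sum_le_sum_of_subset (Finset.filter_subset _ _)
            have h2 : ∑ n ∈ (Finset.Icc 1 N).filter (fun n => idx n < B),
                (∑ t ∈ G1, ind m w (idx n) t)
                = ((Finset.Icc 1 N).filter (fun n => idx n < B)).card * w := by
              rw [Finset.sum_congr rfl hgoodsum, Finset.sum_const, smul_eq_mul]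
            rw [hswap]
            refine le_trans ?_ h1
            calc w * A ≤ w * ((Finset.Icc 1 N).filter (fun n => idx n < B)).card :=
                  Nat.mul_le_mul_left w hAgood
              _ = ((Finset.Icc 1 N).filter (fun n => idx n < B)).card * w := Nat.mul_comm _ _
              _ = _ := h2.symm
          -- to reals
          have hS1R : (w:ℝ)*(A:ℝ) ≤ ∑ t ∈ G1, (Dt t:ℝ) := by
            have := (Nat.cast_le (α := ℝ)).2 hS1g
            push_cast at this
            exact this
          have hm1R : (G1.card:ℝ) ≤ b*P + (w:ℝ) := by
            rw [hcardG1]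
            have : ((B + (w - 1) : ℕ):ℝ) = (B:ℝ) + (w:ℝ) - 1 := by
              push_cast [Nat.cast_sub hw1]
              ring
            rw [this]
            linarith [hBlt]
          have hfrac : (G1.card:ℝ)*((w:ℝ)*Nr)/(m:ℝ) ≤ (b*P + (w:ℝ))*((w:ℝ)*Nr)/P := by
            apply div_le_div₀ (by positivity)
              (mul_le_mul_of_nonneg_right hm1R (by positivity)) hPpos hmP
          have hexp : (b*P + (w:ℝ))*((w:ℝ)*Nr)/P = b*((w:ℝ)*Nr) + (w:ℝ)*((w:ℝ)*Nr)/P := by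
            field_simp
          have hwA : (w:ℝ)*(b*Nr + (9/10)*D*Nr) ≤ (w:ℝ)*(A:ℝ) :=
            mul_le_mul_of_nonneg_left (by linarith) (by positivity)
          calc (1/2)*(w:ℝ)*D*Nr
              = (w:ℝ)*(b*Nr + (9/10)*D*Nr) - b*((w:ℝ)*Nr) - (2/5)*((w:ℝ)*D*Nr) := by ring
            _ ≤ (∑ t ∈ G1, (Dt t:ℝ)) - (G1.card:ℝ)*((w:ℝ)*Nr)/(m:ℝ) := by
                have := hfrac.trans (le_of_eq hexp)
                have h7 := h5'.trans h6'
                linarith [hwA, hS1R]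
      · -- deficit case
        have hEx : (9/10)*D*Nr < b*Nr - (A:ℝ) := by
          rw [abs_of_nonpos (by linarith)] at hEb
          linarith [hEb]
        have hBw : w + 1 ≤ B := by
          by_contra hbad
          push_neg at hbad
          have h1 : (B:ℝ) ≤ (w:ℝ) := by
            have : (B:ℕ) ≤ w := by omega
            exact_mod_cast this
          -- b*P ≤ w so b*Nr ≤ w*Nr/P ≤ Nr/Q
          have h2 : b*P ≤ (w:ℝ) := le_trans hBge h1
          have F1 := mul_le_mul_of_nonneg_right h2 (show (0:ℝ) ≤ Nr*Q by positivity)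
          have F2 := mul_le_mul_of_nonneg_right hwP (show (0:ℝ) ≤ Nr by positivity)
          have F3 := mul_lt_mul_of_pos_right hEx (mul_pos hPpos hQpos)
          have F4 := mul_lt_mul_of_pos_right hDQ (show (0:ℝ) < (9/10)*Nr by positivity)
          nlinarith only [F1, F2, F3, F4, mul_pos hPpos hQpos, hA0,
            mul_le_mul_of_nonneg_right hPN (show (0:ℝ) ≤ Nr by positivity),
            mul_nonneg (mul_nonneg hA0 hPpos.le) hQpos.le, sq_nonneg Nr]
        refine ⟨Finset.Ico (B - w) m, ?_, ?_, ?_, ?_⟩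
        · intro t ht
          simp only [Finset.mem_Ico] at ht
          simp only [Finset.mem_range]
          omega
        · rw [Nat.card_Ico]; omega
        · rw [Nat.card_Ico]; omega
        · set G1 := Finset.Ico (B - w) m with hG1def
          have hcardG1 : G1.card = m - (B - w) := by rw [hG1def, Nat.card_Ico]
          have hgoodsum : ∀ n ∈ (Finset.Icc 1 N).filter (fun n => ¬ (idx n + 2 ≤ B)),
              ∑ t ∈ G1, ind m w (idx n) t = w := by
            intro n hn
            simp only [Finset.mem_filter] at hn
            apply sum_ind_subset m w (idx n) hw0 hm2w (hidxlt n) G1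
              (by rw [hG1def]; intro t ht; simp only [Finset.mem_Ico] at ht;
                  simp only [Finset.mem_range]; omega)
            intro t ht hcond
            rw [sub_mod_eval m (idx n) t (hidxlt n) ht] at hcond
            rw [hG1def]
            simp only [Finset.mem_Ico]
            have hb2 : B ≤ idx n + 1 := by omega
            split_ifs at hcond <;> omega
          have hS1g : w * (N - A) ≤ ∑ t ∈ G1, Dt t := by
            have hswap : ∑ t ∈ G1, Dt t
                = ∑ n ∈ Finset.Icc 1 N, ∑ t ∈ G1, ind m w (idx n) t := by
              simp only [hDtdef]
              exact Finset.sum_comm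
            have h1 : ∑ n ∈ (Finset.Icc 1 N).filter (fun n => ¬ (idx n + 2 ≤ B)),
                (∑ t ∈ G1, ind m w (idx n) t)
                ≤ ∑ n ∈ Finset.Icc 1 N, ∑ t ∈ G1, ind m w (idx n) t :=
              Finset.sum_le_sum_of_subset (Finset.filter_subset _ _)
            have h2 : ∑ n ∈ (Finset.Icc 1 N).filter (fun n => ¬ (idx n + 2 ≤ B)),
                (∑ t ∈ G1, ind m w (idx n) t)
                = ((Finset.Icc 1 N).filter (fun n => ¬ (idx n + 2 ≤ B))).card * w := by
              rw [Finset.sum_congr rfl hgoodsum, Finset.sum_const, smul_eq_mul]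
            rw [hswap]
            refine le_trans ?_ h1
            calc w * (N - A)
                ≤ w * ((Finset.Icc 1 N).filter (fun n => ¬ (idx n + 2 ≤ B))).card :=
                  Nat.mul_le_mul_left w hAbad
              _ = ((Finset.Icc 1 N).filter (fun n => ¬ (idx n + 2 ≤ B))).card * w :=
                  Nat.mul_comm _ _
              _ = _ := h2.symm
          have hS1R : (w:ℝ)*(Nr - (A:ℝ)) ≤ ∑ t ∈ G1, (Dt t:ℝ) := by
            have := (Nat.cast_le (α := ℝ)).2 hS1g
            push_cast [Nat.cast_sub hAN] at this
            rw [hNrdef]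
            exact this
          have hm1R : ((G1.card:ℕ):ℝ) = (m:ℝ) - ((B:ℝ) - (w:ℝ)) := by
            rw [hcardG1]
            push_cast [Nat.cast_sub (show B - w ≤ m by omega), Nat.cast_sub (show w ≤ B by omega)]
            ring
          have hkey2 : b*(P+1) ≤ (B:ℝ) + (w:ℝ) := by
            have he : b*(P+1) = b*P + b := by ring
            linarith [hBge, hb1, hw1R]
          have hstep1 : b*((w:ℝ)*Nr) ≤ ((B:ℝ)+(w:ℝ))*((w:ℝ)*Nr)/(P+1) := by
            rw [le_div_iff₀ (by positivity)]
            calc b*((w:ℝ)*Nr)*(P+1) = (b*(P+1))*((w:ℝ)*Nr) := by ring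
              _ ≤ ((B:ℝ)+(w:ℝ))*((w:ℝ)*Nr) := mul_le_mul_of_nonneg_right hkey2 hwDnn
          have hBwnn : (0:ℝ) ≤ (B:ℝ) - (w:ℝ) := by
            have : (w:ℝ) + 1 ≤ (B:ℝ) := by exact_mod_cast hBw
            linarith
          have hmRpos : (0:ℝ) < (m:ℝ) := lt_of_lt_of_le hPpos hmP
          have hstep2a : ((B:ℝ)-(w:ℝ))*((w:ℝ)*Nr)/(P+1) ≤ ((B:ℝ)-(w:ℝ))*((w:ℝ)*Nr)/(m:ℝ) :=
            div_le_div_of_nonneg_left (by positivity) hmRpos hmP'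
          have hstep2b : 2*(w:ℝ)*((w:ℝ)*Nr)/(P+1) ≤ 2*(w:ℝ)*((w:ℝ)*Nr)/P :=
            div_le_div_of_nonneg_left (by positivity) hPpos (by linarith)
          have hsum2 : ((B:ℝ)+(w:ℝ))*((w:ℝ)*Nr)/(P+1)
              = ((B:ℝ)-(w:ℝ))*((w:ℝ)*Nr)/(P+1) + 2*(w:ℝ)*((w:ℝ)*Nr)/(P+1) := by
            ring
          have hfrac2 : b*((w:ℝ)*Nr) - 2*(w:ℝ)*((w:ℝ)*Nr)/P
              ≤ ((B:ℝ)-(w:ℝ))*((w:ℝ)*Nr)/(m:ℝ) := by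
            linarith [hstep1, hstep2a, hstep2b, hsum2]
          have hXcalc : (G1.card:ℝ)*((w:ℝ)*Nr)/(m:ℝ)
              = (w:ℝ)*Nr - ((B:ℝ)-(w:ℝ))*((w:ℝ)*Nr)/(m:ℝ) := by
            rw [hm1R]
            field_simp
          have h2wP : 2*(w:ℝ)*((w:ℝ)*Nr)/P ≤ (2/5)*((w:ℝ)*D*Nr) := by
            have he : 2*(w:ℝ)*((w:ℝ)*Nr)/P = 2*((w:ℝ)*((w:ℝ)*Nr)/P) := by ring
            rw [he]
            have h6'' : 2*((w:ℝ)*Nr/Q) ≤ (2/5)*((w:ℝ)*D*Nr) := by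
              rw [show 2*((w:ℝ)*Nr/Q) = (2*((w:ℝ)*Nr))/Q by ring, div_le_iff₀ hQpos]
              nlinarith only [mul_le_mul_of_nonneg_left hDQ5.le
                (show (0:ℝ) ≤ (2/5)*((w:ℝ)*Nr) by positivity), hwDnn]
            linarith [h5']
          have hwA2 : (w:ℝ)*(b*Nr - (A:ℝ)) ≥ (w:ℝ)*((9/10)*D*Nr) :=
            mul_le_mul_of_nonneg_left hEx.le (by positivity)
          rw [hXcalc]
          have hexpand : (∑ t ∈ G1, (Dt t:ℝ)) - ((w:ℝ)*Nr - ((B:ℝ)-(w:ℝ))*((w:ℝ)*Nr)/(m:ℝ))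
              ≥ (w:ℝ)*(Nr - (A:ℝ)) - (w:ℝ)*Nr + (b*((w:ℝ)*Nr) - 2*(w:ℝ)*((w:ℝ)*Nr)/P) := by
            linarith [hS1R, hfrac2]
          have hfin : (w:ℝ)*(Nr - (A:ℝ)) - (w:ℝ)*Nr + b*((w:ℝ)*Nr) = (w:ℝ)*(b*Nr - (A:ℝ)) := by
            ring
          linarith [hexpand, h2wP, hwA2]
    -- Engel / Cauchy-Schwarz stage
    obtain ⟨G1, hG1sub, hm1pos, hm1lt, hXlb⟩ := key
    set G2 := Finset.range m \ G1 with hG2def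
    have hcard12 : G1.card + G2.card = m := by
      rw [hG2def, Finset.card_sdiff_of_subset hG1sub]
      have := Finset.card_le_card hG1sub
      rw [Finset.card_range] at this ⊢
      omega
    have hm2pos : 0 < G2.card := by omega
    have hm1Rpos : (0:ℝ) < (G1.card:ℝ) := by exact_mod_cast hm1pos
    have hm2Rpos : (0:ℝ) < (G2.card:ℝ) := by exact_mod_cast hm2pos
    have hsplitsum : (∑ t ∈ G2, (Dt t:ℝ)) + (∑ t ∈ G1, (Dt t:ℝ))
        = ∑ t ∈ Finset.range m, (Dt t:ℝ) := Finset.sum_sdiff hG1sub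
    have hsplitsq : (∑ t ∈ G2, (Dt t:ℝ)^2) + (∑ t ∈ G1, (Dt t:ℝ)^2)
        = ∑ t ∈ Finset.range m, (Dt t:ℝ)^2 := Finset.sum_sdiff hG1sub
    have hDtotR : ∑ t ∈ Finset.range m, (Dt t:ℝ) = (w:ℝ)*Nr := by
      have h := congrArg (fun k : ℕ => (k:ℝ)) hDsumN
      push_cast at h
      rw [hNrdef]
      linarith
    have hc1 : (∑ t ∈ G1, (Dt t:ℝ))^2 ≤ (G1.card:ℝ) * ∑ t ∈ G1, (Dt t:ℝ)^2 :=
      sq_sum_le_card_mul_sum_sq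
    have hc2 : (∑ t ∈ G2, (Dt t:ℝ))^2 ≤ (G2.card:ℝ) * ∑ t ∈ G2, (Dt t:ℝ)^2 :=
      sq_sum_le_card_mul_sum_sq
    have hengel := engel2 (G1.card:ℝ) (G2.card:ℝ)
      (∑ t ∈ G1, (Dt t:ℝ)) (∑ t ∈ G2, (Dt t:ℝ))
      (∑ t ∈ G1, (Dt t:ℝ)^2) (∑ t ∈ G2, (Dt t:ℝ)^2)
      hm1Rpos hm2Rpos hc1 hc2
    have hmsumR : (G1.card:ℝ) + (G2.card:ℝ) = (m:ℝ) := by exact_mod_cast hcard12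
    have hS12 : (∑ t ∈ G1, (Dt t:ℝ)) + (∑ t ∈ G2, (Dt t:ℝ)) = (w:ℝ)*Nr := by
      rw [← hDtotR, ← hsplitsum]; ring
    have hA12 : (∑ t ∈ G1, (Dt t:ℝ)^2) + (∑ t ∈ G2, (Dt t:ℝ)^2)
        = ∑ t ∈ Finset.range m, (Dt t:ℝ)^2 := by
      rw [← hsplitsq]; ring
    rw [hS12, hmsumR, hA12] at hengel
    -- hengel : ((w:ℝ)*Nr)^2 + 4*(S1 - card1*((w:ℝ)*Nr)/m)^2 ≤ m * Σ
    have hXpos : (0:ℝ) < (1/2)*(w:ℝ)*D*Nr := by positivity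
    have h4X : ((w:ℝ)*D*Nr)^2
        ≤ 4*((∑ t ∈ G1, (Dt t:ℝ)) - (G1.card:ℝ)*((w:ℝ)*Nr)/(m:ℝ))^2 := by
      nlinarith only [hXlb, hXpos]
    have hsqnn : (0:ℝ) ≤ ∑ t ∈ Finset.range m, (Dt t:ℝ)^2 :=
      Finset.sum_nonneg (fun t _ => sq_nonneg _)
    have hcastsq : ((∑ t ∈ Finset.range m, (Dt t)^2 : ℕ):ℝ)
        = ∑ t ∈ Finset.range m, (Dt t:ℝ)^2 := by push_cast; rfl
    have hRHS : (m:ℝ) * (∑ t ∈ Finset.range m, (Dt t:ℝ)^2)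
        < (P+1)*((w:ℝ)*Nr + (Nr^2/P + F (w, N)) * ((w:ℝ) * ((w:ℝ)+1))) := by
      have h1 : (m:ℝ) * (∑ t ∈ Finset.range m, (Dt t:ℝ)^2)
          ≤ (P+1) * (∑ t ∈ Finset.range m, (Dt t:ℝ)^2) :=
        mul_le_mul_of_nonneg_right hmP' hsqnn
      have h2 : (∑ t ∈ Finset.range m, (Dt t:ℝ)^2)
          < (w:ℝ)*Nr + (Nr^2/P + F (w, N)) * ((w:ℝ) * ((w:ℝ)+1)) := by
        rw [← hcastsq]; exact hmaster
      have h3 := mul_lt_mul_of_pos_left h2 (show (0:ℝ) < P + 1 by linarith)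
      linarith
    have hmaster2 : ((w:ℝ)*Nr)^2 + ((w:ℝ)*D*Nr)^2
        < (P+1)*((w:ℝ)*Nr + (Nr^2/P + F (w, N)) * ((w:ℝ) * ((w:ℝ)+1))) := by
      linarith [hengel, h4X, hRHS]
    -- final numerics
    set R : ℝ := Nr^2/P with hRdef
    have hPR : P*R = Nr^2 := by rw [hRdef]; field_simp
    have hRnn : (0:ℝ) ≤ R := by rw [hRdef]; positivity
    have hDPnn : (0:ℝ) ≤ D^2*P/25 := by positivity
    have hPw : (0:ℝ) < (P+1)*((w:ℝ)^2+(w:ℝ)) := by positivity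
    have hb3 : (P+1)*(F (w,N))*((w:ℝ)^2+(w:ℝ)) ≤ (4/25)*(w:ℝ)^2*D^2*Nr^2 := by
      have h1 : (P+1)*(F (w,N))*((w:ℝ)^2+(w:ℝ)) ≤ (P+1)*(D^2*P/25)*((w:ℝ)^2+(w:ℝ)) := by
        have := mul_le_mul_of_nonneg_right
          (mul_le_mul_of_nonneg_left hFb.le (show (0:ℝ) ≤ P+1 by linarith))
          (show (0:ℝ) ≤ (w:ℝ)^2+(w:ℝ) by positivity)
        linarith
      have h2 : (P+1)*(D^2*P/25)*((w:ℝ)^2+(w:ℝ)) ≤ (2*P)*(D^2*P/25)*(2*(w:ℝ)^2) := by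
        apply mul_le_mul
        · apply mul_le_mul (by linarith) (le_refl _) hDPnn (by linarith)
        · nlinarith only [hw1R, Nat.cast_nonneg (α := ℝ) w]
        · positivity
        · positivity
      have h3 : (2*P)*(D^2*P/25)*(2*(w:ℝ)^2) = (4/25)*(w:ℝ)^2*D^2*P^2 := by
        field_simp; ring
      have h4 : (4/25)*(w:ℝ)^2*D^2*P^2 ≤ (4/25)*(w:ℝ)^2*D^2*Nr^2 := by
        have hPP : P^2 ≤ Nr^2 := by nlinarith only [hPN, hPpos, hNpos]
        nlinarith only [hPP, sq_nonneg ((w:ℝ)*D)]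
      linarith
    have hb2 : R*(w:ℝ)^2 + R*(w:ℝ) ≤ (1/5)*(w:ℝ)*Nr^2 := by
      have h1 : R*(w:ℝ)^2 + R*(w:ℝ) ≤ 2*R*(w:ℝ)^2 := by nlinarith only [hw1R, hRnn, Nat.cast_nonneg (α := ℝ) w, mul_nonneg hRnn (Nat.cast_nonneg (α := ℝ) w)]
      have h2 : 2*R*(w:ℝ)^2 ≤ (1/5)*(w:ℝ)*Nr^2 := by
        rw [hRdef, show 2*(Nr^2/P)*(w:ℝ)^2 = (2*Nr^2*(w:ℝ)^2)/P by ring,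
          div_le_iff₀ hPpos]
        nlinarith only [mul_le_mul_of_nonneg_left hwP
          (show (0:ℝ) ≤ (1/5)*Nr^2*(w:ℝ) by positivity),
          mul_le_mul_of_nonneg_left hQ10
          (show (0:ℝ) ≤ (1/5)*Nr^2*(w:ℝ)^2 by positivity)]
      linarith
    have hb5 : (P+1)*((w:ℝ)*Nr) ≤ 2*(w:ℝ)*Nr^2 := by
      nlinarith only [mul_le_mul_of_nonneg_right hPN (show (0:ℝ) ≤ (w:ℝ)*Nr by positivity),
        mul_le_mul_of_nonneg_left hNr1 (show (0:ℝ) ≤ (w:ℝ)*Nr by positivity)]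
    have hexpandR : (P+1)*((w:ℝ)*Nr + (Nr^2/P + F (w, N)) * ((w:ℝ) * ((w:ℝ)+1)))
        = (P+1)*((w:ℝ)*Nr) + (P*R)*((w:ℝ)^2+(w:ℝ)) + R*((w:ℝ)^2+(w:ℝ))
          + (P+1)*(F (w,N))*((w:ℝ)^2+(w:ℝ)) := by
      rw [hRdef]
      field_simp
      ring
    have hreduced : (21/25)*((w:ℝ)^2*D^2*Nr^2) < (16/5)*((w:ℝ)*Nr^2) := by
      rw [hexpandR, hPR] at hmaster2
      linarith only [hmaster2, hb3, hb2, hb5]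
    -- contradiction
    have hQ2ge : (100:ℝ) ≤ Q^2 := by nlinarith only [hQ10, hQpos]
    have hD2Q2 : (25:ℝ) < D^2*Q^2 := by nlinarith only [hDQ5, hDpos, hQpos, mul_pos hDpos hQpos]
    have hQ4D2 : (2500:ℝ) ≤ Q^4*D^2 := by
      linarith only [mul_le_mul_of_nonneg_left hD2Q2.le (show (0:ℝ) ≤ Q^2 by positivity),
        mul_le_mul_of_nonneg_right hQ2ge (show (0:ℝ) ≤ (25:ℝ) by norm_num)]
    have hwD2 : (625:ℝ) ≤ (w:ℝ)*D^2 := by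
      linarith only [mul_le_mul_of_nonneg_right hwQ4' (sq_nonneg D), hQ4D2]
    have hfinal : 625*((w:ℝ)*Nr^2) ≤ ((w:ℝ)*D^2)*((w:ℝ)*Nr^2) :=
      mul_le_mul_of_nonneg_right hwD2 (by positivity)
    have hwNr2nn : (0:ℝ) ≤ (w:ℝ)*Nr^2 := by positivity
    nlinarith only [hreduced, hfinal, hwNr2nn]
end

section
/- Let b ≥ 2 be an integer and let (x_n)_{n≥1} be the van der Corput sequence in base b, i.e. x_n = g_b(n) where g_b is the radical-inverse function in base b. Then (x_n) is a low-discrepancy sequence: there exists a constant C > 0 (depending only on b) such that D_N*(x₁,…,x_N) ≤ C · log(N+1) / N for all N ≥ 1. -/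
open scoped Classical

/-- Radical-inverse function in base `b`: if `r = Σ_j a_j b^j` with digits
`a_j ∈ {0,…,b-1}`, then `radInv b r = Σ_j a_j b^{-j-1}`. -/
noncomputable def radInv (b : ℕ) (r : ℕ) : ℝ :=
  (Nat.ofDigits ((b : ℝ))⁻¹ (Nat.digits b r)) / b

theorem ofDigits_cons' {α : Type*} [Semiring α] (b : α) (d : ℕ) (L : List ℕ) :
    Nat.ofDigits b (d :: L) = (d : α) + b * Nat.ofDigits b L := rfl

theorem ofDigits_nil' {α : Type*} [Semiring α] (b : α) : Nat.ofDigits b [] = 0 := rfl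

lemma ofDigits_inv_nonneg (b : ℕ) (L : List ℕ) (hb : 2 ≤ b) :
    0 ≤ Nat.ofDigits ((b : ℝ))⁻¹ L := by
  induction L with
  | nil => simp [ofDigits_nil']
  | cons d L ih =>
    rw [ofDigits_cons']
    have hb0 : (0:ℝ) ≤ (b:ℝ)⁻¹ := by positivity
    positivity

lemma radInv_nonneg (b : ℕ) (hb : 2 ≤ b) (n : ℕ) : 0 ≤ radInv b n := by
  unfold radInv
  have := ofDigits_inv_nonneg b (Nat.digits b n) hb
  positivity

lemma radInv_zero (b : ℕ) : radInv b 0 = 0 := by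
  simp [radInv, ofDigits_nil']

lemma radInv_step (b : ℕ) (hb : 2 ≤ b) (n : ℕ) :
    (b:ℝ) * radInv b n = ((n % b : ℕ) : ℝ) + radInv b (n / b) := by
  have hb0 : (b:ℝ) ≠ 0 := by positivity
  rcases Nat.eq_zero_or_pos n with h | h
  · simp [h, radInv, ofDigits_nil']
  · rw [radInv, Nat.digits_def' (by omega : 1 < b) h, ofDigits_cons', radInv]
    field_simp

lemma radInv_lt_one (b : ℕ) (hb : 2 ≤ b) (n : ℕ) : radInv b n < 1 := by
  induction n using Nat.strong_induction_on with
  | _ n ih =>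
    rcases Nat.eq_zero_or_pos n with h | h
    · simp [h, radInv_zero]
    · have hb0 : (0:ℝ) < (b:ℝ) := by positivity
      have h1 := radInv_step b hb n
      have h2 : radInv b (n / b) < 1 := ih (n / b) (Nat.div_lt_self h (by omega))
      have h3 : ((n % b : ℕ) : ℝ) ≤ (b:ℝ) - 1 := by
        have : n % b ≤ b - 1 := by
          have := Nat.mod_lt n (show 0 < b by omega); omega
        calc ((n % b : ℕ) : ℝ) ≤ ((b - 1 : ℕ) : ℝ) := by exact_mod_cast this
          _ = (b:ℝ) - 1 := by push_cast [Nat.cast_sub (by omega : 1 ≤ b)]; ring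
      nlinarith
lemma card_mod_lt_formula (b : ℕ) (hb : 2 ≤ b) (d : ℕ) (hd : d ≤ b) (N : ℕ) :
    ((Finset.range N).filter (fun n => n % b < d)).card
      = (N / b) * d + min (N % b) d := by
  induction N with
  | zero => simp
  | succ N ih =>
    rw [Finset.range_add_one, Finset.filter_insert]
    have hb0 : 0 < b := by omega
    have hdm := Nat.div_add_mod N b
    have hmlt := Nat.mod_lt N hb0
    have he : ((N + 1) / b = N / b ∧ (N + 1) % b = N % b + 1)
        ∨ (N % b + 1 = b ∧ (N + 1) / b = N / b + 1 ∧ (N + 1) % b = 0) := by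
      rcases Nat.lt_or_ge (N % b + 1) b with hc | hc
      · left
        rw [Nat.div_mod_unique hb0]
        exact ⟨by omega, hc⟩
      · right
        refine ⟨by omega, ?_⟩
        rw [Nat.div_mod_unique hb0]
        refine ⟨?_, by omega⟩
        rw [Nat.mul_add, Nat.mul_one]; omega
    by_cases h : N % b < d
    · rw [if_pos h, Finset.card_insert_of_notMem (by simp), ih]
      rcases he with ⟨h1, h2⟩ | ⟨hc', h1, h2⟩ <;> rw [h1, h2]
      · have : min (N % b + 1) d = min (N % b) d + 1 := by omega
        rw [this]; ring
      · rw [Nat.add_mul, Nat.one_mul]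
        generalize N / b * d = A
        omega
    · rw [if_neg h, ih]
      rcases he with ⟨h1, h2⟩ | ⟨hc', h1, h2⟩ <;> rw [h1, h2]
      · have : min (N % b + 1) d = min (N % b) d := by omega
        rw [this]
      · rw [Nat.add_mul, Nat.one_mul]
        generalize N / b * d = A
        omega

lemma card_mod_lt_bound (b : ℕ) (hb : 2 ≤ b) (d : ℕ) (hd : d ≤ b) (N : ℕ) :
    |((((Finset.range N).filter (fun n => n % b < d)).card : ℝ)) - N * d / b| ≤ b := by
  rw [card_mod_lt_formula b hb d hd N]
  have hb0 : (0:ℝ) < (b:ℝ) := by positivity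
  have hdm := Nat.div_add_mod N b
  have hmlt := Nat.mod_lt N (show 0 < b by omega)
  set q := N / b with hq
  set r := N % b with hr
  have hN : (N : ℝ) = b * q + r := by exact_mod_cast hdm.symm
  have hrb : (r:ℝ) < b := by exact_mod_cast hmlt
  have hdb : (d:ℝ) ≤ b := by exact_mod_cast hd
  have key : (((q * d + min r d : ℕ)) : ℝ) - N * d / b = min (r:ℝ) (d:ℝ) - r * d / b := by
    push_cast
    rw [hN]
    field_simp
    ring
  rw [key, abs_le]
  have hm1 : min (r:ℝ) (d:ℝ) ≤ d := min_le_right _ _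
  have hm0 : (0:ℝ) ≤ min (r:ℝ) (d:ℝ) := le_min (by positivity) (by positivity)
  have h5 : (r:ℝ) * d / b ≤ d := by
    rw [div_le_iff₀ hb0]; nlinarith
  have h6 : (0:ℝ) ≤ (r:ℝ) * d / b := by positivity
  constructor
  · linarith
  · linarith
/-- The number of `t` with `b * t + d < N`. -/
def quotBound (b d N : ℕ) : ℕ := if N ≤ d then 0 else (N - d - 1) / b + 1

lemma lt_quotBound_iff (b : ℕ) (hb : 2 ≤ b) (d N t : ℕ) (hd : d < b) :
    t < quotBound b d N ↔ b * t + d < N := by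
  unfold quotBound
  split_ifs with h
  · simp only [Nat.not_lt_zero, false_iff, not_lt]
    have : d ≤ b * t + d := Nat.le_add_left d (b * t)
    omega
  · rw [Nat.lt_succ_iff, Nat.le_div_iff_mul_le (show 0 < b by omega), Nat.mul_comm]
    generalize b * t = x
    omega

lemma quotBound_bound (b : ℕ) (hb : 2 ≤ b) (d N : ℕ) (hd : d < b) :
    |((quotBound b d N : ℕ) : ℝ) - N / b| ≤ 1 := by
  have hb0 : (0:ℝ) < (b:ℝ) := by positivity
  set T := quotBound b d N with hT
  have h1 : ¬ (T < T) := lt_irrefl T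
  rw [hT, lt_quotBound_iff b hb d N T hd] at h1
  push_neg at h1
  have e1 : (N:ℝ) ≤ (b:ℝ) * T + d := by exact_mod_cast h1
  have hdR : (d:ℝ) < b := by exact_mod_cast hd
  have hd0 : (0:ℝ) ≤ (d:ℝ) := by positivity
  rw [abs_le]
  constructor
  · have h2 : (N:ℝ) ≤ ((T:ℝ) + 1) * b := by nlinarith
    have h3 : (N:ℝ) / b ≤ (T:ℝ) + 1 := (div_le_iff₀ hb0).mpr h2
    linarith
  · rcases Nat.eq_zero_or_pos T with h0 | h0
    · have h4 : (0:ℝ) ≤ (N:ℝ) / b := by positivity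
      rw [h0]
      push_cast
      linarith
    · have h2 : b * (T - 1) + d < N := by
        rw [← lt_quotBound_iff b hb d N (T - 1) hd, ← hT]
        omega
      have e2 : ((b * (T - 1) + d : ℕ) : ℝ) < N := by exact_mod_cast h2
      have e3 : ((T - 1 : ℕ) : ℝ) = (T:ℝ) - 1 := by
        push_cast [Nat.cast_sub h0]
        ring
      have e2' : (b:ℝ) * ((T:ℝ) - 1) + d < N := by
        push_cast at e2
        rw [e3] at e2
        linarith
      have h5 : ((T:ℝ) - 1) * b ≤ N := by nlinarith
      have h6 : (T:ℝ) - 1 ≤ (N:ℝ) / b := (le_div_iff₀ hb0).mpr h5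
      linarith

lemma card_block_eq (b : ℕ) (hb : 2 ≤ b) (d N : ℕ) (hd : d < b) (P : ℕ → Prop) :
    ((Finset.range N).filter (fun n => n % b = d ∧ P (n / b))).card
      = ((Finset.range (quotBound b d N)).filter P).card := by
  apply Finset.card_bij' (fun n _ => n / b) (fun t _ => b * t + d)
  · intro n hn
    simp only [Finset.mem_filter, Finset.mem_range] at hn ⊢
    refine ⟨?_, hn.2.2⟩
    rw [lt_quotBound_iff b hb d N _ hd]
    have := Nat.div_add_mod n b
    omega
  · intro t ht
    simp only [Finset.mem_filter, Finset.mem_range] at ht ⊢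
    rw [lt_quotBound_iff b hb d N t hd] at ht
    refine ⟨ht.1, ?_, ?_⟩
    · rw [Nat.mul_add_mod, Nat.mod_eq_of_lt hd]
    · rw [Nat.mul_add_div (by omega), Nat.div_eq_of_lt hd, Nat.add_zero]
      exact ht.2
  · intro n hn
    simp only [Finset.mem_filter, Finset.mem_range] at hn
    have := Nat.div_add_mod n b
    omega
  · intro t ht
    rw [Nat.mul_add_div (by omega), Nat.div_eq_of_lt hd, Nat.add_zero]
lemma vdc_main (b : ℕ) (hb : 2 ≤ b) : ∀ (m K N : ℕ), K ≤ b ^ m →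
    |(((Finset.range N).filter (fun n => radInv b n < (K : ℝ) / (b:ℝ) ^ m)).card : ℝ)
      - (N : ℝ) * K / (b:ℝ) ^ m| ≤ 4 * b * m := by
  have hb0 : (0:ℝ) < (b:ℝ) := by
    have : (0:ℕ) < b := by omega
    exact_mod_cast this
  intro m
  induction m with
  | zero =>
    intro K N hK
    simp only [pow_zero] at hK ⊢
    interval_cases K
    · have hf : (Finset.range N).filter (fun n => radInv b n < ((0:ℕ):ℝ)/1) = ∅ := by
        apply Finset.filter_false_of_mem
        intro n _
        simp only [Nat.cast_zero, zero_div]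
        exact not_lt.mpr (radInv_nonneg b hb n)
      rw [hf]
      simp
    · have hf : (Finset.range N).filter (fun n => radInv b n < ((1:ℕ):ℝ)/1) = Finset.range N := by
        apply Finset.filter_true_of_mem
        intro n _
        simp only [Nat.cast_one]
        rw [div_one]
        exact radInv_lt_one b hb n
      rw [hf]
      simp
  | succ m ih =>
    intro K N hK
    have hbm : (0:ℝ) < (b:ℝ) ^ m := by positivity
    have hbm1 : (0:ℝ) < (b:ℝ) ^ (m+1) := by positivity
    have hrhs0 : (0:ℝ) ≤ 4 * (b:ℝ) * (↑m+1) := by positivity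
    by_cases hKtop : K = b ^ (m+1)
    · subst hKtop
      have h1 : (((b:ℕ)^(m+1) : ℕ) : ℝ) = (b:ℝ)^(m+1) := by push_cast; ring
      have hfil : (Finset.range N).filter
          (fun n => radInv b n < (((b:ℕ)^(m+1) : ℕ) : ℝ) / (b:ℝ)^(m+1)) = Finset.range N := by
        apply Finset.filter_true_of_mem
        intro n _
        rw [h1, div_self (ne_of_gt hbm1)]
        exact radInv_lt_one b hb n
      rw [hfil, Finset.card_range, h1, mul_div_assoc, div_self (ne_of_gt hbm1), mul_one]
      simpa using hrhs0
    · have hK1 : K < b ^ (m+1) := lt_of_le_of_ne hK hKtop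
      have hbmN : 0 < b ^ m := Nat.pow_pos (by omega)
      set d := K / b ^ m with hdd
      set r := K % b ^ m with hrr
      have hdb : d < b := by
        rw [hdd, Nat.div_lt_iff_lt_mul hbmN]
        calc K < b ^ (m+1) := hK1
          _ = b * b ^ m := by ring
      have hrm : r < b ^ m := Nat.mod_lt _ hbmN
      have hKdr : b ^ m * d + r = K := Nat.div_add_mod K (b ^ m)
      have hKr : (K:ℝ) = (b:ℝ)^m * d + r := by exact_mod_cast hKdr.symm
      have hchar : ∀ n : ℕ, (radInv b n < (K:ℝ) / (b:ℝ)^(m+1)) ↔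
          (n % b < d ∨ (n % b = d ∧ radInv b (n / b) < (r:ℝ) / (b:ℝ)^m)) := by
        intro n
        have hstep := radInv_step b hb n
        have hy0 := radInv_nonneg b hb (n / b)
        have hy1 := radInv_lt_one b hb (n / b)
        have hr1 : (r:ℝ) / (b:ℝ)^m < 1 := by
          rw [div_lt_one hbm]; exact_mod_cast hrm
        have hr0 : (0:ℝ) ≤ (r:ℝ) / (b:ℝ)^m := by positivity
        have hKe : (K:ℝ) / (b:ℝ)^(m+1) = ((d:ℝ) + (r:ℝ) / (b:ℝ)^m) / b := by
          rw [hKr]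
          field_simp
          ring
        rw [hKe, lt_div_iff₀ hb0, mul_comm (radInv b n) ((b:ℝ))]
        constructor
        · intro h
          rcases Nat.lt_trichotomy (n % b) d with hlt | heq | hgt
          · exact Or.inl hlt
          · right
            refine ⟨heq, ?_⟩
            have he : ((n % b : ℕ):ℝ) = d := by exact_mod_cast heq
            linarith
          · exfalso
            have he : (d:ℝ) + 1 ≤ ((n % b : ℕ):ℝ) := by exact_mod_cast hgt
            linarith
        · intro h
          rcases h with hlt | ⟨heq, hy⟩
          · have he : ((n % b : ℕ):ℝ) + 1 ≤ (d:ℝ) := by exact_mod_cast hlt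
            linarith
          · have he : ((n % b : ℕ):ℝ) = d := by exact_mod_cast heq
            linarith
      have hsplit : (Finset.range N).filter (fun n => radInv b n < (K:ℝ) / (b:ℝ)^(m+1))
          = ((Finset.range N).filter (fun n => n % b < d)) ∪
            ((Finset.range N).filter
              (fun n => n % b = d ∧ radInv b (n / b) < (r:ℝ) / (b:ℝ)^m)) := by
        rw [← Finset.filter_or]
        exact Finset.filter_congr (fun n _ => by rw [hchar n])
      have hdisj : Disjoint ((Finset.range N).filter (fun n => n % b < d))
          ((Finset.range N).filter
            (fun n => n % b = d ∧ radInv b (n / b) < (r:ℝ) / (b:ℝ)^m)) := by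
        rw [Finset.disjoint_left]
        intro n h1 h2
        simp only [Finset.mem_filter] at h1 h2
        omega
      have hcard := Finset.card_union_of_disjoint hdisj
      set T := quotBound b d N with hTT
      have h2eq : ((Finset.range N).filter
            (fun n => n % b = d ∧ radInv b (n / b) < (r:ℝ) / (b:ℝ)^m)).card
          = ((Finset.range T).filter (fun t => radInv b t < (r:ℝ) / (b:ℝ)^m)).card := by
        have hcb := card_block_eq b hb d N hdb (fun t => radInv b t < (r:ℝ) / (b:ℝ)^m)
        convert hcb using 2
      have hA := ih r T (le_of_lt hrm)
      have hc1 := card_mod_lt_bound b hb d (le_of_lt hdb) N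
      have hTb := quotBound_bound b hb d N hdb
      set c1 : ℝ := (((Finset.range N).filter (fun n => n % b < d)).card : ℝ) with hc1d
      set A : ℝ := (((Finset.range T).filter
          (fun t => radInv b t < (r:ℝ) / (b:ℝ)^m)).card : ℝ) with hAd
      have hcast : (((Finset.range N).filter
            (fun n => radInv b n < (K:ℝ) / (b:ℝ)^(m+1))).card : ℝ) = c1 + A := by
        rw [hsplit, hcard, h2eq]
        push_cast
        ring
      rw [hcast]
      have hident : c1 + A - (N : ℝ) * K / (b:ℝ)^(m+1)
          = (c1 - (N:ℝ) * d / b) + (A - (T:ℝ) * r / (b:ℝ)^m)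
            + (((T:ℝ) - (N:ℝ) / b) * ((r:ℝ) / (b:ℝ)^m)) := by
        rw [hKr]
        field_simp
        ring
      rw [hident]
      have hr1 : (r:ℝ) / (b:ℝ)^m ≤ 1 := by
        rw [div_le_one hbm]
        have : (r:ℝ) < (b:ℝ)^m := by exact_mod_cast hrm
        linarith
      have hr0 : (0:ℝ) ≤ (r:ℝ) / (b:ℝ)^m := by positivity
      have habs3 : |((T:ℝ) - (N:ℝ) / b) * ((r:ℝ) / (b:ℝ)^m)| ≤ 1 := by
        rw [abs_mul, abs_of_nonneg hr0]
        exact mul_le_one₀ hTb hr0 hr1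
      calc |(c1 - (N:ℝ) * d / b) + (A - (T:ℝ) * r / (b:ℝ)^m)
            + (((T:ℝ) - (N:ℝ) / b) * ((r:ℝ) / (b:ℝ)^m))|
          ≤ |c1 - (N:ℝ) * d / b| + |A - (T:ℝ) * r / (b:ℝ)^m|
            + |((T:ℝ) - (N:ℝ) / b) * ((r:ℝ) / (b:ℝ)^m)| := abs_add_three _ _ _
        _ ≤ (b:ℝ) + 4 * b * m + 1 := by
            exact add_le_add (add_le_add hc1 hA) habs3
        _ ≤ 4 * b * ((m:ℝ) + 1) := by
            have : (2:ℝ) ≤ (b:ℝ) := by exact_mod_cast hb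
            nlinarith
        _ = 4 * b * ((m + 1 : ℕ) : ℝ) := by push_cast; ring
lemma icc_count_eq (b : ℕ) (hb : 2 ≤ b) (N : ℕ) (β : ℝ) (hβ : 0 < β) :
    (((Finset.range (N+1)).filter (fun n => radInv b n < β)).card : ℝ)
      = (((Finset.Icc 1 N).filter (fun n => radInv b n < β)).card : ℝ) + 1 := by
  have hins : Finset.range (N+1) = insert 0 (Finset.Icc 1 N) := by
    ext n
    simp only [Finset.mem_range, Finset.mem_insert, Finset.mem_Icc]
    omega
  rw [hins, Finset.filter_insert, if_pos (by rw [radInv_zero]; exact hβ),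
    Finset.card_insert_of_notMem (by simp)]
  push_cast
  ring

set_option maxHeartbeats 1000000 in
theorem stmt12 (b : ℕ) (hb : 2 ≤ b) :
    ∃ C : ℝ, 0 < C ∧ ∀ N : ℕ, 1 ≤ N →
      starDiscrepancy N (fun n => radInv b n) ≤ C * Real.log (N + 1) / N := by
  have hb0 : (0:ℝ) < (b:ℝ) := by
    have : (0:ℕ) < b := by omega
    exact_mod_cast this
  have hl2 : (0:ℝ) < Real.log 2 := Real.log_pos (by norm_num)
  refine ⟨(8 * b + 2) / Real.log 2, by positivity, ?_⟩
  intro N hN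
  have hN0 : (0:ℝ) < (N:ℝ) := by exact_mod_cast hN
  set L : ℝ := Real.log ((N:ℝ) + 1) with hL
  have hL2 : Real.log 2 ≤ L := by
    apply Real.log_le_log (by norm_num)
    have : (1:ℝ) ≤ (N:ℝ) := by exact_mod_cast hN
    linarith
  have hL0 : 0 < L := lt_of_lt_of_le hl2 hL2
  set m : ℕ := Nat.clog b (N+1) with hm
  have hmup : N + 1 ≤ b ^ m := Nat.le_pow_clog (by omega) _
  have hmb : (m:ℝ) ≤ 2 * L / Real.log 2 := by
    rcases Nat.eq_zero_or_pos m with h0 | h0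
    · rw [h0]
      have : (0:ℝ) ≤ 2 * L / Real.log 2 := by positivity
      simpa using this
    · have hlt : b ^ (m - 1) < N + 1 := by
        have := Nat.pow_pred_clog_lt_self (show 1 < b by omega) (show 1 < N + 1 by omega)
        rwa [← hm] at this
      have hltR : ((b:ℝ)) ^ (m-1) < (N:ℝ) + 1 := by
        have : ((b ^ (m-1) : ℕ) : ℝ) < ((N + 1 : ℕ) : ℝ) := by exact_mod_cast hlt
        push_cast at this
        linarith
      have hlog : ((m:ℝ) - 1) * Real.log b ≤ L := by
        have h1 : Real.log ((b:ℝ) ^ (m-1)) ≤ L := by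
          apply Real.log_le_log (by positivity)
          linarith
        rw [Real.log_pow] at h1
        have he : (((m-1 : ℕ)):ℝ) = (m:ℝ) - 1 := by
          push_cast [Nat.cast_sub h0]
          ring
        rwa [he] at h1
      have hlb : Real.log 2 ≤ Real.log b := by
        apply Real.log_le_log (by norm_num)
        exact_mod_cast hb
      have h2 : ((m:ℝ) - 1) * Real.log 2 ≤ L := by
        have hm1 : (0:ℝ) ≤ (m:ℝ) - 1 := by
          have : (1:ℝ) ≤ (m:ℝ) := by exact_mod_cast h0
          linarith
        nlinarith
      rw [le_div_iff₀ hl2]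
      nlinarith
  apply Real.sSup_le
  · rintro v ⟨β, hβ0, hβ1, rfl⟩
    have hfeq : (Finset.Icc 1 N).filter (fun n => 0 ≤ radInv b n ∧ radInv b n < β)
        = (Finset.Icc 1 N).filter (fun n => radInv b n < β) :=
      Finset.filter_congr (fun n _ => and_iff_right (radInv_nonneg b hb n))
    have hbm : (0:ℝ) < (b:ℝ)^m := by positivity
    set K : ℕ := ⌈β * (b:ℝ)^m⌉₊ with hK
    have hKpos : 1 ≤ K := by
      rw [hK]
      refine Nat.one_le_iff_ne_zero.mpr (fun h => ?_)
      have := Nat.ceil_eq_zero.mp h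
      nlinarith
    have hKceil : β * (b:ℝ)^m ≤ (K:ℝ) := Nat.le_ceil _
    have hKlt : (K:ℝ) < β * (b:ℝ)^m + 1 := Nat.ceil_lt_add_one (by positivity)
    have hKle : K ≤ b ^ m := by
      rw [hK, Nat.ceil_le]
      push_cast
      nlinarith
    have hK1le : K - 1 ≤ b ^ m := le_trans (Nat.sub_le _ _) hKle
    have hK1R : ((K - 1 : ℕ) : ℝ) = (K:ℝ) - 1 := by
      push_cast [Nat.cast_sub hKpos]
      ring
    have hup : β ≤ (K:ℝ) / (b:ℝ)^m := by
      rw [le_div_iff₀ hbm]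
      linarith
    have hlo : ((K - 1 : ℕ):ℝ) / (b:ℝ)^m < β := by
      rw [div_lt_iff₀ hbm, hK1R]
      linarith
    set Aβ : ℝ := (((Finset.range (N+1)).filter (fun n => radInv b n < β)).card : ℝ) with hAβ
    set Ahi : ℝ := (((Finset.range (N+1)).filter
        (fun n => radInv b n < (K:ℝ) / (b:ℝ)^m)).card : ℝ) with hAhi
    set Alo : ℝ := (((Finset.range (N+1)).filter
        (fun n => radInv b n < ((K - 1 : ℕ):ℝ) / (b:ℝ)^m)).card : ℝ) with hAlo
    have hmono1 : Alo ≤ Aβ := by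
      rw [hAlo, hAβ]
      exact_mod_cast Finset.card_le_card (Finset.monotone_filter_right _
        (fun n _ h => lt_of_lt_of_le h (le_of_lt hlo)))
    have hmono2 : Aβ ≤ Ahi := by
      rw [hAβ, hAhi]
      exact_mod_cast Finset.card_le_card (Finset.monotone_filter_right _
        (fun n _ h => lt_of_lt_of_le h hup))
    have hhi := vdc_main b hb m K (N+1) hKle
    have hlo2 := vdc_main b hb m (K-1) (N+1) hK1le
    rw [← hAhi] at hhi
    rw [← hAlo] at hlo2
    have hNbm : ((N:ℝ) + 1) ≤ (b:ℝ)^m := by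
      have h := hmup
      have : ((N + 1 : ℕ):ℝ) ≤ ((b ^ m : ℕ):ℝ) := by exact_mod_cast h
      push_cast at this
      linarith
    have hNcast : ((N + 1 : ℕ):ℝ) = (N:ℝ) + 1 := by push_cast; ring
    rw [hNcast] at hhi hlo2
    set P : ℝ := (b:ℝ)^m with hP
    set n1 : ℝ := (N:ℝ) + 1 with hn1
    have hn1P : n1 ≤ P := hNbm
    have hn10 : (0:ℝ) < n1 := by rw [hn1]; linarith
    clear_value Aβ Ahi Alo P n1
    have e1 := (abs_le.mp hhi).2
    have e2 := (abs_le.mp hlo2).1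
    have hd1 : n1 * (K:ℝ) / P ≤ n1 * β + 1 := by
      rw [div_le_iff₀ hbm]
      nlinarith only [mul_le_mul_of_nonneg_left (le_of_lt hKlt) (le_of_lt hn10), hn1P, hn10]
    have hd2 : n1 * β - 1 ≤ n1 * ((K - 1 : ℕ):ℝ) / P := by
      rw [le_div_iff₀ hbm, hK1R]
      nlinarith only [mul_le_mul_of_nonneg_left hKceil (le_of_lt hn10), hn1P, hn10]
    have t1 : Ahi ≤ n1 * β + 1 + 4 * (b:ℝ) * m := by linarith only [e1, hd1]
    have t2 : n1 * β - 1 - 4 * (b:ℝ) * m ≤ Alo := by linarith only [e2, hd2]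
    have hmain1 : Aβ - n1 * β ≤ 4 * (b:ℝ) * m + 1 := by
      linarith only [t1, hmono2]
    have hmain2 : -(4 * (b:ℝ) * m + 1) ≤ Aβ - n1 * β := by
      linarith only [t2, hmono1]
    have hicc := icc_count_eq b hb N β hβ0
    rw [← hAβ] at hicc
    set c : ℝ := (((Finset.Icc 1 N).filter (fun n => radInv b n < β)).card : ℝ) with hc
    have hcount : |c - (N:ℝ) * β| ≤ 4 * (b:ℝ) * m + 2 := by
      have hβabs : |β - 1| ≤ 1 := by
        rw [abs_le]
        constructor <;> linarith
      have he : c - (N:ℝ) * β = (Aβ - n1 * β) + (β - 1) := by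
        rw [hn1]
        linarith
      rw [he]
      calc |(Aβ - n1 * β) + (β - 1)| ≤ |Aβ - n1 * β| + |β - 1| := abs_add_le _ _
        _ ≤ (4 * (b:ℝ) * m + 1) + 1 := add_le_add (abs_le.mpr ⟨hmain2, hmain1⟩) hβabs
        _ = 4 * (b:ℝ) * m + 2 := by ring
    have hmb' : (m:ℝ) * Real.log 2 ≤ 2 * L := (le_div_iff₀ hl2).mp hmb
    have hfinal : 4 * (b:ℝ) * m + 2 ≤ (8 * (b:ℝ) + 2) / Real.log 2 * L := by
      rw [div_mul_eq_mul_div, le_div_iff₀ hl2]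
      have hbR : (0:ℝ) ≤ (b:ℝ) := le_of_lt hb0
      nlinarith
    have hgoal : |c / (N:ℝ) - β| ≤ (8 * (b:ℝ) + 2) / Real.log 2 * L / N := by
      have heq : c / (N:ℝ) - β = (c - (N:ℝ) * β) / N := by
        field_simp
      rw [heq, abs_div, abs_of_pos hN0]
      gcongr
      exact hcount.trans hfinal
    show |(((Finset.Icc 1 N).filter
          (fun n => 0 ≤ radInv b n ∧ radInv b n < β)).card : ℝ) / (N:ℝ) - β|
        ≤ (8 * (b:ℝ) + 2) / Real.log 2 * L / N
    rw [hfeq]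
    exact hgoal
  · exact div_nonneg (mul_nonneg (by positivity) hL0.le) hN0.le
end
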